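/- arXiv:1412.7130 — 7 statements merged into one kernel-verified Lean document; each statement's English description precedes it below -/
import Mathlib

section
/- Let G = (V,E,ω) be a finite weighted directed graph with vertex set V = {1,…,n}, weights ω(i,j) ∈ ℂ, and weighted adjacency matrix M_G = (ω(i,j))_{i,j∈V} (with ω(i,j) = 0 whenever (i,j) ∉ E). Let λ₀ ∈ ℂ be an eigenvalue of M_G with eigenvector u = (u₁,…,u_n) ∈ ℂⁿ, i.e. M_G u = λ₀ u and u ≠ 0, and assume S = {m+1,…,n} is a λ₀-structural set of G. Then the restriction u_S = (u_{m+1},…,u_n) satisfies R_S(G,λ₀) u_S = λ₀ u_S and u_S ≠ 0; in particular λ₀ is an eigenvalue of the reduced matrix R_S(G,λ₀). -/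
/-! Common definitions for isospectral graph reductions (Bunimovich–Webb). -/

section IGRDefs

variable {V : Type*} {K : Type*} [Field K]

/-- A cycle of the graph with edge relation `E`, encoded as the list of its vertices
`(i₀, …, i_p)` with `i₀ = i_p`: length at least 2 (`p ≥ 1`), consecutive pairs are edges,
first vertex equals last vertex, and all vertices are distinct except `i₀ = i_p`. -/
def IsCycleList (E : V → V → Prop) (l : List V) : Prop :=
  2 ≤ l.length ∧ l.Chain' E ∧ l.head? = l.getLast? ∧ l.dropLast.Nodup

/-- `S` is a `lam`-structural set: it is nonempty, every cycle that is not a loop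
(i.e. of list-length `> 2`) contains a vertex of `S`, and `ω i i ≠ lam` off `S`. -/
def IsStructural {α : Type*} (E : V → V → Prop) (ω : V → V → α) (lam : α) (S : Set V) :
    Prop :=
  S.Nonempty ∧ (∀ l, IsCycleList E l → 2 < l.length → ∃ v ∈ l, v ∈ S) ∧
    ∀ i, i ∉ S → ω i i ≠ lam

/-- A branch of `(G,S)` from `i` to `j`, encoded as the list of its vertices
`(i₀, i₁, …, i_p)`: a path (all vertices distinct, except that possibly `i₀ = i_p`)
of length `p ≥ 1` whose interior vertices `i₁, …, i_{p-1}` lie outside `S`. -/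
def IsBranchList (E : V → V → Prop) (S : Set V) (i j : V) (l : List V) : Prop :=
  2 ≤ l.length ∧ l.Chain' E ∧ l.head? = some i ∧ l.getLast? = some j ∧
    l.tail.Nodup ∧ l.dropLast.Nodup ∧ ∀ v ∈ l.tail.dropLast, v ∉ S

/-- The weight `ω(β,λ) = ω(i₀,i₁) ∏_{ℓ=1}^{p-1} ω(i_ℓ,i_{ℓ+1})/(λ - ω(i_ℓ,i_ℓ))`
of a branch `β = (i₀,…,i_p)`. -/
noncomputable def branchWeight (ω : V → V → K) (lam : K) : List V → K
  | [] => 0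
  | [_] => 0
  | [i, j] => ω i j
  | i :: j :: k :: t => ω i j * branchWeight ω lam (j :: k :: t) / (lam - ω j j)

/-- The entry `R_{ij}(G,S,λ) = Σ_{β ∈ B_{ij}} ω(β,λ)` of the (extended) reduced matrix. -/
noncomputable def Rentry (E : V → V → Prop) (S : Set V) (ω : V → V → K) (lam : K)
    (i j : V) : K :=
  ∑ᶠ l ∈ {l : List V | IsBranchList E S i j l}, branchWeight ω lam l

/-- `R^{(p)}_{ij}(G,S,λ)`: the sum of weights of branches of length `p` from `i` to `j`. -/
noncomputable def RentryN (E : V → V → Prop) (S : Set V) (ω : V → V → K) (lam : K)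
    (p : ℕ) (i j : V) : K :=
  ∑ᶠ l ∈ {l : List V | IsBranchList E S i j l ∧ l.length = p + 1}, branchWeight ω lam l

/-- `Sk E S k` is the set of vertices of depth `≤ k`: `S₀ = S` and
`S_{k+1} = S_k ∪ {i | every edge from i ends in S_k}`. -/
def Sk (E : V → V → Prop) (S : Set V) : ℕ → Set V
  | 0 => S
  | k + 1 => Sk E S k ∪ {i | ∀ j, E i j → j ∈ Sk E S k}

end IGRDefs

set_option linter.unusedSectionVars false
set_option maxHeartbeats 1000000

section Aux

open List

variable {V : Type*} [Fintype V] [DecidableEq V]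

/-- Paths ending in `S` with all earlier vertices off `S`. -/
def IsPathTo (E : V → V → Prop) (S : Set V) (l : List V) : Prop :=
  l ≠ [] ∧ l.Chain' E ∧ l.Nodup ∧ (∀ v ∈ l.dropLast, v ∉ S) ∧ ∃ j ∈ S, l.getLast? = some j

/-- The set of branches from `i` (to anywhere in `S`). -/
def Bset (E : V → V → Prop) (S : Set V) (i : V) : Set (List V) :=
  {l | l.Chain' E ∧ l.head? = some i ∧ IsPathTo E S l.tail ∧ i ∉ l.tail.dropLast}

def PathHead (E : V → V → Prop) (S : Set V) (j : V) : Set (List V) :=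
  {l | IsPathTo E S l ∧ l.head? = some j}

def Cset (E : V → V → Prop) (S : Set V) (i j : V) : Set (List V) :=
  {l | l ∈ Bset E S i ∧ l.tail.head? = some j}

def Dset (E : V → V → Prop) (S : Set V) (i j : V) : Set (List V) :=
  {l | IsPathTo E S l ∧ l.head? = some j ∧ E i j ∧ i ∉ l.dropLast}

/-- Relative weight of a path. -/
noncomputable def Wt (ω : V → V → ℂ) (lam : ℂ) : List V → ℂ
  | [] => 1
  | [_] => 1
  | a :: b :: t => ω a b * Wt ω lam (b :: t) / (lam - ω a a)

/-- `u` at the last vertex of a list. -/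
def uL (u : V → ℂ) (l : List V) : ℂ := l.getLast?.elim 0 u

noncomputable def gfun (E : V → V → Prop) (S : Set V) (ω : V → V → ℂ) (lam : ℂ)
    (u : V → ℂ) (i : V) : ℂ :=
  ∑ᶠ l ∈ Bset E S i, branchWeight ω lam l * uL u l

/-- The successor relation off `S`. -/
def qrel (E : V → V → Prop) (S : Set V) (i j : V) : Prop :=
  i ∉ S ∧ j ∉ S ∧ j ≠ i ∧ E i j

variable {E : V → V → Prop} {S : Set V} {ω : V → V → ℂ} {lam : ℂ} {u : V → ℂ}

lemma bw_cons (ω : V → V → ℂ) (lam : ℂ) (a b : V) (t : List V) :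
    branchWeight ω lam (a :: b :: t) = ω a b * Wt ω lam (b :: t) := by
  induction t generalizing a b with
  | nil => simp [branchWeight, Wt]
  | cons c t ih => rw [branchWeight, ih, Wt, mul_div_assoc]

lemma Wt_cons_cons (ω : V → V → ℂ) (lam : ℂ) (a b : V) (t : List V) :
    Wt ω lam (a :: b :: t) = branchWeight ω lam (a :: b :: t) / (lam - ω a a) := by
  rw [Wt, bw_cons, mul_div_assoc]

lemma uL_cons (u : V → ℂ) (a b : V) (t : List V) :
    uL u (a :: b :: t) = uL u (b :: t) := by
  simp [uL, List.getLast?_cons_cons]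

lemma eq_cons_of_head? {l : List V} {a : V} (h : l.head? = some a) : l = a :: l.tail := by
  cases l <;> simp_all

/-- Any set of lists with nodup tails is finite. -/
lemma finite_of_tail_nodup {A : Set (List V)} (h : ∀ l ∈ A, l.tail.Nodup) : A.Finite := by
  apply Set.Finite.subset (List.finite_length_le V (Fintype.card V + 1))
  intro l hl
  have h1 : l.tail.length ≤ Fintype.card V := (h l hl).length_le_card
  have : l.length ≤ l.tail.length + 1 := by cases l <;> simp
  exact this.trans (by omega)

lemma Bset_finite (E : V → V → Prop) (S : Set V) (i : V) : (Bset E S i).Finite :=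
  finite_of_tail_nodup fun _ hl => hl.2.2.1.2.2.1

lemma branch_finite (E : V → V → Prop) (S : Set V) (i j : V) :
    {l : List V | IsBranchList E S i j l}.Finite :=
  finite_of_tail_nodup fun _ hl => hl.2.2.2.2.1

lemma pathHead_finite (E : V → V → Prop) (S : Set V) (j : V) :
    (PathHead E S j).Finite :=
  finite_of_tail_nodup fun _ hl => hl.1.2.2.1.tail

lemma Dset_finite (E : V → V → Prop) (S : Set V) (i j : V) : (Dset E S i j).Finite :=
  (pathHead_finite E S j).subset fun l hl => ⟨hl.1, hl.2.1⟩

lemma Cset_finite (E : V → V → Prop) (S : Set V) (i j : V) : (Cset E S i j).Finite :=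
  (Bset_finite E S i).subset fun _ hl => hl.1

lemma finsum_mem_mul_left {A : Set (List V)} (hA : A.Finite) (c : ℂ) (f : List V → ℂ) :
    ∑ᶠ l ∈ A, c * f l = c * ∑ᶠ l ∈ A, f l := by
  rw [finsum_mem_eq_finite_toFinset_sum _ hA, finsum_mem_eq_finite_toFinset_sum _ hA,
    Finset.mul_sum]

lemma finsum_mem_div' {A : Set (List V)} (hA : A.Finite) (d : ℂ) (f : List V → ℂ) :
    ∑ᶠ l ∈ A, f l / d = (∑ᶠ l ∈ A, f l) / d := by
  rw [finsum_mem_eq_finite_toFinset_sum _ hA, finsum_mem_eq_finite_toFinset_sum _ hA,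
    Finset.sum_div]

lemma no_return (hstr : IsStructural E ω lam S) {k j : V} (hk : k ∉ S) (hkj : E k j)
    (hjk : j ≠ k) {l : List V} (hl : IsPathTo E S l) (hh : l.head? = some j) : k ∉ l := by
  intro hmem
  obtain ⟨s, t, rfl⟩ := List.append_of_mem hmem
  obtain ⟨hne, hch, hnd, hdrop, jS, hjS, hlast⟩ := hl
  have hs : s ≠ [] := by
    rintro rfl
    simp only [nil_append, head?_cons, Option.some.injEq] at hh
    exact hjk hh.symm
  obtain ⟨a, s', rfl⟩ := List.exists_cons_of_ne_nil hs
  have hja : a = j := by simpa using hh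
  subst hja
  have ht : t ≠ [] := by
    rintro rfl
    have h2 : ((a :: s') ++ [k]).getLast? = some k := List.getLast?_concat
    have h3 : some jS = some k := hlast.symm.trans h2
    have h4 : jS = k := by injection h3
    exact hk (h4 ▸ hjS)
  have hdisj : k ∉ a :: s' := by
    have := List.nodup_append'.mp hnd
    exact fun hks => (this.2.2 hks List.mem_cons_self).elim
  have hcyc : IsCycleList E ((k :: a :: s') ++ [k]) := by
    refine ⟨by simp, ?_, ?_, ?_⟩
    · rw [cons_append]
      refine List.isChain_cons.mpr ⟨?_, ?_⟩
      · intro b hb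
        simp only [cons_append, head?_cons, Option.mem_def, Option.some.injEq] at hb
        rwa [← hb]
      · exact hch.prefix ⟨t, by simp⟩
    · rw [List.getLast?_concat]; simp
    · rw [List.dropLast_concat]
      exact List.nodup_cons.mpr ⟨hdisj, (List.nodup_append.mp hnd).1⟩
  obtain ⟨v, hv, hvS⟩ := hstr.2.1 _ hcyc (by simp)
  have hv' : v = k ∨ v ∈ a :: s' := by
    rcases List.mem_append.mp hv with h | h
    · rcases List.mem_cons.mp h with h | h
      · exact Or.inl h
      · exact Or.inr h
    · exact Or.inl (by simpa using h)
  rcases hv' with rfl | h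
  · exact hk hvS
  · have : v ∈ ((a :: s') ++ k :: t).dropLast := by
      rw [List.dropLast_append_cons]
      exact List.mem_append_left _ h
    exact hdrop v this hvS

lemma sublist_pair {x : V} : ∀ {m : List V}, [x, x] <+ m →
    ∃ l1 l2 l3, m = l1 ++ x :: l2 ++ x :: l3 := by
  intro m h
  induction m with
  | nil => cases h
  | cons b m ih =>
      cases h with
      | cons _ h' =>
          obtain ⟨l1, l2, l3, rfl⟩ := ih h'
          exact ⟨b :: l1, l2, l3, rfl⟩
      | cons_cons _ h' =>
          have hx : x ∈ m := List.Sublist.subset h' (by simp)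
          obtain ⟨l2, l3, rfl⟩ := List.append_of_mem hx
          exact ⟨[], l2, l3, rfl⟩

lemma chain_qrel_not_mem_S {a : V} {l : List V} (h : List.Chain (qrel E S) a l) :
    ∀ v ∈ l, v ∉ S := by
  induction l generalizing a with
  | nil => simp
  | cons b l ih =>
      replace h := List.chain_cons.mp h
      intro v hv
      rcases List.mem_cons.mp hv with rfl | hv
      · exact h.1.2.1
      · exact ih h.2 v hv

lemma no_closed_chain (hstr : IsStructural E ω lam S) :
    ∀ (N : ℕ) (a : V) (l : List V), l.length ≤ N → l ≠ [] →
      List.Chain (qrel E S) a l → (a :: l).getLast? = some a → False := by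
  intro N
  induction N with
  | zero => intro a l h h0 _ _; exact h0 (List.length_eq_zero_iff.mp (Nat.le_zero.mp h))
  | succ N ih =>
      intro a l hlen hne hch hlast
      have haS : a ∉ S := by
        obtain ⟨b, l', rfl⟩ := List.exists_cons_of_ne_nil hne
        exact (List.chain_cons.mp hch).1.1
      have hchain' : List.Chain' (qrel E S) (a :: l) := hch
      by_cases hnd : (a :: l).dropLast.Nodup
      · match l, hne with
        | [b], _ =>
            have hb : b = a := by simpa using hlast
            exact ((List.chain_cons.mp hch).1.2.2.1) hb
        | b :: c :: l', _ =>
            have hcyc : IsCycleList E (a :: b :: c :: l') := by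
              refine ⟨by simp, ?_, ?_, hnd⟩
              · exact List.IsChain.imp (fun _ _ hq => hq.2.2.2) hchain'
              · simpa using hlast.symm
            obtain ⟨v, hv, hvS⟩ := hstr.2.1 _ hcyc (by simp)
            rcases List.mem_cons.mp hv with rfl | hv
            · exact haS hvS
            · exact chain_qrel_not_mem_S hch v hv hvS
      · obtain ⟨x, hdup⟩ := List.exists_duplicate_iff_not_nodup.mpr hnd
        obtain ⟨l1, l2, l3, hdec⟩ := sublist_pair (List.duplicate_iff_sublist.mp hdup)
        have hc : a :: l = l1 ++ (x :: l2 ++ [x]) ++ (l3 ++ [a]) := by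
          have h1 : (a :: l).dropLast ++ [a] = a :: l := by
            have := List.dropLast_append_getLast? a (l := a :: l) (by simpa using hlast)
            simpa using this
          rw [← h1, hdec]; simp
        have hinf : List.Chain' (qrel E S) (x :: l2 ++ [x]) :=
          hchain'.infix ⟨l1, l3 ++ [a], by rw [hc]⟩
        have hch2 : List.Chain (qrel E S) x (l2 ++ [x]) := hinf
        have hlast2 : (x :: (l2 ++ [x])).getLast? = some x := by
          rw [← List.cons_append]; exact List.getLast?_concat
        have hlen2 : (l2 ++ [x]).length ≤ N := by
          have : (a :: l).length = (l1 ++ (x :: l2 ++ [x]) ++ (l3 ++ [a])).length :=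
            congrArg List.length hc
          simp at this
          simp
          omega
        exact ih x (l2 ++ [x]) hlen2 (by simp) hch2 hlast2

lemma qrel_wf (hstr : IsStructural E ω lam S) : WellFounded (Function.swap (qrel E S)) := by
  have hirr : ∀ a : V, ¬ Relation.TransGen (qrel E S) a a := by
    intro a h
    obtain ⟨c, hac, htr⟩ := Relation.TransGen.head'_iff.mp h
    obtain ⟨l, hl, hlast⟩ := List.exists_isChain_cons_of_relationReflTransGen htr
    refine no_closed_chain hstr (c :: l).length a (c :: l) le_rfl (by simp)
      (List.Chain.cons hac hl) ?_
    rw [List.getLast?_cons_cons, List.getLast?_eq_getLast (l := c :: l) (by simp), hlast]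
  letI : IsIrrefl V (Relation.TransGen (Function.swap (qrel E S))) :=
    ⟨fun a h => hirr a (Relation.transGen_swap.mp h)⟩
  have hwf := Finite.wellFounded_of_trans_of_irrefl
    (Relation.TransGen (Function.swap (qrel E S)))
  exact Subrelation.wf (fun h => Relation.TransGen.single h) hwf

end Aux

section Aux2
open List
variable {V : Type*} [Fintype V] [DecidableEq V]
variable {E : V → V → Prop} {S : Set V} {ω : V → V → ℂ} {lam : ℂ} {u : V → ℂ}

lemma Bset_eq_iUnion (i : V) : Bset E S i = ⋃ j : V, Cset E S i j := by
  ext l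
  constructor
  · intro hl
    obtain ⟨b, t, hbt⟩ := List.exists_cons_of_ne_nil hl.2.2.1.1
    exact Set.mem_iUnion.mpr ⟨b, hl, by rw [hbt]; rfl⟩
  · intro hl
    obtain ⟨j, hj⟩ := Set.mem_iUnion.mp hl
    exact hj.1

lemma Cset_disjoint (i : V) : Pairwise (Function.onFun _root_.Disjoint (Cset E S i)) := by
  intro j1 j2 hne
  refine Set.disjoint_left.mpr fun l h1 h2 => hne ?_
  have := h1.2.symm.trans h2.2
  injection this

lemma Cset_eq_image (i j : V) : Cset E S i j = List.cons i '' Dset E S i j := by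
  ext l
  constructor
  · rintro ⟨⟨hch, hh, hp, hnd⟩, hth⟩
    refine ⟨l.tail, ⟨hp, hth, ?_, hnd⟩, (eq_cons_of_head? hh).symm⟩
    rw [eq_cons_of_head? hh] at hch
    exact (List.isChain_cons.mp hch).1 j hth
  · rintro ⟨l', ⟨hp, hh', hE, hnd⟩, rfl⟩
    refine ⟨⟨List.isChain_cons.mpr ⟨fun b hb => ?_, hp.2.1⟩, rfl, by simpa, by simpa⟩, by simpa⟩
    rw [hh'] at hb
    obtain rfl : j = b := by injection hb
    exact hE

lemma f_cons {l' : List V} (hne : l' ≠ []) {j : V} (hh : l'.head? = some j) (i : V) :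
    branchWeight ω lam (i :: l') * uL u (i :: l') = ω i j * (Wt ω lam l' * uL u l') := by
  obtain ⟨b, t, rfl⟩ := List.exists_cons_of_ne_nil hne
  obtain rfl : b = j := by injection hh
  rw [bw_cons, uL_cons, mul_assoc]

lemma pathHead_of_mem_S {j : V} (hj : j ∈ S) : PathHead E S j = {[j]} := by
  ext l
  constructor
  · rintro ⟨⟨hne, hch, hnd, hdrop, jS, hjS, hlast⟩, hh⟩
    obtain ⟨b, t, rfl⟩ := List.exists_cons_of_ne_nil hne
    obtain rfl : b = j := by injection hh
    cases t with
    | nil => rfl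
    | cons c t' =>
        exact absurd hj (hdrop b (by rw [List.dropLast_cons₂]; exact List.mem_cons_self))
  · rintro rfl
    exact ⟨⟨by simp, List.IsChain.singleton _, by simp, by simp, j, hj, by simp⟩, rfl⟩

lemma pathHead_of_not_mem_S {j : V} (hj : j ∉ S) : PathHead E S j = Bset E S j := by
  ext l
  constructor
  · rintro ⟨⟨hne, hch, hnd, hdrop, jS, hjS, hlast⟩, hh⟩
    obtain ⟨b, t, rfl⟩ := List.exists_cons_of_ne_nil hne
    obtain rfl : b = j := by injection hh
    have ht : t ≠ [] := by
      rintro rfl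
      obtain rfl : jS = b := by simpa using hlast.symm
      exact hj hjS
    obtain ⟨c, t', rfl⟩ := List.exists_cons_of_ne_nil ht
    refine ⟨hch, rfl, ⟨by simp, hch.tail, hnd.sublist (List.tail_sublist _), ?_, jS, hjS, ?_⟩, ?_⟩
    · intro v hv
      exact hdrop v (by rw [List.dropLast_cons₂]; exact List.mem_cons_of_mem _ hv)
    · simpa using hlast
    · exact fun hmem => (List.nodup_cons.mp hnd).1
        ((List.dropLast_sublist _).subset hmem)
  · rintro ⟨hch, hh, ⟨tne, tch, tnd, tdrop, jS, hjS, tlast⟩, hnod⟩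
    have hlne : l ≠ [] := by rintro rfl; simp at hh
    obtain ⟨b, t, rfl⟩ := List.exists_cons_of_ne_nil hlne
    obtain rfl : b = j := by injection hh
    obtain ⟨c, t', rfl⟩ := List.exists_cons_of_ne_nil (by simpa using tne : t ≠ [])
    have hjt : b ∉ c :: t' := by
      intro hmem
      have hsplit := List.dropLast_append_getLast? jS (l := c :: t') (by simpa using tlast)
      rw [← hsplit] at hmem
      rcases List.mem_append.mp hmem with h | h
      · exact hnod (by simpa using h)
      · obtain rfl : b = jS := by simpa using h
        exact hj hjS
    refine ⟨⟨by simp, hch, List.nodup_cons.mpr ⟨hjt, by simpa using tnd⟩, ?_, jS, hjS, ?_⟩, hh⟩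
    · intro v hv
      rw [List.dropLast_cons₂] at hv
      rcases List.mem_cons.mp hv with rfl | hv
      · exact hj
      · exact tdrop v (by simpa using hv)
    · simpa using tlast

lemma Gfun_eq_of_mem_S {j : V} (hj : j ∈ S) :
    ∑ᶠ l ∈ PathHead E S j, Wt ω lam l * uL u l = u j := by
  rw [pathHead_of_mem_S hj, finsum_mem_singleton]
  simp [Wt, uL]

lemma Gfun_eq_of_not_mem_S {j : V} (hj : j ∉ S) (hstr : IsStructural E ω lam S)
    (Hval : gfun E S ω lam u j = (lam - ω j j) * u j) :
    ∑ᶠ l ∈ PathHead E S j, Wt ω lam l * uL u l = u j := by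
  have hd : lam - ω j j ≠ 0 := sub_ne_zero.mpr (Ne.symm (hstr.2.2 j hj))
  rw [pathHead_of_not_mem_S hj]
  have hcongr : ∀ l ∈ Bset E S j,
      Wt ω lam l * uL u l = branchWeight ω lam l * uL u l / (lam - ω j j) := by
    intro l hl
    obtain ⟨hch, hh, hp, hnd⟩ := hl
    have hlne : l ≠ [] := by rintro rfl; simp at hh
    obtain ⟨b, t, rfl⟩ := List.exists_cons_of_ne_nil hlne
    obtain rfl : b = j := by injection hh
    obtain ⟨c, t', rfl⟩ := List.exists_cons_of_ne_nil (by simpa using hp.1 : t ≠ [])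
    rw [Wt_cons_cons, div_mul_eq_mul_div]
  rw [finsum_mem_congr rfl hcongr, finsum_mem_div' (Bset_finite E S j)]
  rw [gfun] at Hval
  rw [Hval, mul_div_cancel_left₀ _ hd]

end Aux2

section Aux3
open List
variable {V : Type*} [Fintype V] [DecidableEq V]
variable {E : V → V → Prop} {S : Set V} {ω : V → V → ℂ} {lam : ℂ} {u : V → ℂ}
variable [DecidablePred (· ∈ S)]

lemma finsum_mem_mul_right {A : Set (List V)} (hA : A.Finite) (c : ℂ) (f : List V → ℂ) :
    ∑ᶠ l ∈ A, f l * c = (∑ᶠ l ∈ A, f l) * c := by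
  rw [finsum_mem_eq_finite_toFinset_sum _ hA, finsum_mem_eq_finite_toFinset_sum _ hA,
    Finset.sum_mul]

lemma cons_injOn (i : V) (A : Set (List V)) : Set.InjOn (List.cons i) A :=
  fun x _ y _ h => by simpa using congrArg List.tail h

lemma hCval (i j : V) : ∑ᶠ l ∈ Cset E S i j, branchWeight ω lam l * uL u l
    = ω i j * ∑ᶠ l ∈ Dset E S i j, Wt ω lam l * uL u l := by
  rw [Cset_eq_image, finsum_mem_image (cons_injOn i _),
    finsum_mem_congr rfl (fun l' hl' => f_cons hl'.1.1 hl'.2.1 i),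
    finsum_mem_mul_left (Dset_finite E S i j)]

lemma gfun_expand (hstr : IsStructural E ω lam S) (hω : ∀ i j, ¬ E i j → ω i j = 0) (i : V)
    (Hind : ∀ j, E i j → j ≠ i → j ∉ S → gfun E S ω lam u j = (lam - ω j j) * u j) :
    gfun E S ω lam u i =
      (∑ j ∈ Finset.univ.erase i, ω i j * u j) + (if i ∈ S then ω i i * u i else 0) := by
  classical
  have hsum : gfun E S ω lam u i
      = ∑ j : V, ∑ᶠ l ∈ Cset E S i j, branchWeight ω lam l * uL u l := by
    rw [gfun, Bset_eq_iUnion i, finsum_mem_iUnion (Cset_disjoint i) (Cset_finite E S i),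
      finsum_eq_sum_of_fintype]
  have hterm : ∀ j, j ≠ i →
      (∑ᶠ l ∈ Cset E S i j, branchWeight ω lam l * uL u l) = ω i j * u j := by
    intro j hj
    by_cases hE : E i j
    · have hDP : Dset E S i j = PathHead E S j := by
        ext l
        constructor
        · rintro ⟨hp, hh, _, _⟩; exact ⟨hp, hh⟩
        · rintro ⟨hp, hh⟩
          refine ⟨hp, hh, hE, ?_⟩
          by_cases hiS : i ∈ S
          · exact fun hmem => (hp.2.2.2.1 i hmem) hiS
          · exact fun hmem =>
              no_return hstr hiS hE hj hp hh ((List.dropLast_sublist _).subset hmem)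
      rw [hCval, hDP]
      by_cases hjS : j ∈ S
      · rw [Gfun_eq_of_mem_S hjS]
      · rw [Gfun_eq_of_not_mem_S hjS hstr (Hind j hE hj hjS)]
    · have hD : Dset E S i j = ∅ :=
        Set.eq_empty_iff_forall_notMem.mpr fun l hl => hE hl.2.2.1
      rw [hCval, hD, hω i j hE]
      simp
  have hDsub : Dset E S i i ⊆ {[i]} := by
    rintro l ⟨hp, hh, hE, hnd⟩
    obtain ⟨b, t, rfl⟩ := List.exists_cons_of_ne_nil hp.1
    obtain rfl : b = i := by injection hh
    cases t with
    | nil => rfl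
    | cons c t' =>
        exact absurd (by rw [List.dropLast_cons₂]; exact List.mem_cons_self :
          b ∈ (b :: c :: t').dropLast) hnd
  have htermi : (∑ᶠ l ∈ Cset E S i i, branchWeight ω lam l * uL u l)
      = (if i ∈ S then ω i i * u i else 0) := by
    by_cases hiS : i ∈ S
    · rw [if_pos hiS]
      by_cases hE : E i i
      · have hD : Dset E S i i = {[i]} := by
          refine subset_antisymm hDsub ?_
          rintro l rfl
          exact ⟨⟨by simp, List.IsChain.singleton _, by simp, by simp, i, hiS, by simp⟩, rfl, hE, by simp⟩
        rw [hCval, hD, finsum_mem_singleton]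
        simp [Wt, uL]
      · have hD : Dset E S i i = ∅ :=
          Set.eq_empty_iff_forall_notMem.mpr fun l hl => hE hl.2.2.1
        rw [hCval, hD, hω i i hE]
        simp
    · rw [if_neg hiS]
      have hD : Dset E S i i = ∅ := by
        refine Set.eq_empty_iff_forall_notMem.mpr fun l hl => ?_
        have : l = [i] := hDsub hl
        subst this
        obtain ⟨_, _, _, _, jS, hjS, hlast⟩ := hl.1
        obtain rfl : jS = i := by simpa using hlast.symm
        exact hiS hjS
      rw [hCval, hD]
      simp
  rw [hsum, ← Finset.sum_erase_add Finset.univ _ (Finset.mem_univ i)]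
  rw [htermi]
  congr 1
  exact Finset.sum_congr rfl fun j hj => hterm j (Finset.ne_of_mem_erase hj)

lemma gfun_eq (hstr : IsStructural E ω lam S) (hω : ∀ i j, ¬ E i j → ω i j = 0)
    (hu' : ∀ k, ∑ j, ω k j * u j = lam * u k) :
    ∀ k, k ∉ S → gfun E S ω lam u k = (lam - ω k k) * u k := by
  intro k
  refine (qrel_wf hstr).induction
    (C := fun k => k ∉ S → gfun E S ω lam u k = (lam - ω k k) * u k) k ?_
  intro x IH hx
  rw [gfun_expand hstr hω x (fun j hE hne hjS => IH j ⟨hx, hjS, hne, hE⟩ hjS)]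
  rw [if_neg hx, add_zero]
  have h2 : ∑ j ∈ Finset.univ.erase x, ω x j * u j + ω x x * u x = ∑ j : V, ω x j * u j :=
    Finset.sum_erase_add _ _ (Finset.mem_univ x)
  have h3 := h2.trans (hu' x)
  linear_combination h3

end Aux3

section Aux4
open List
variable {V : Type*} [Fintype V] [DecidableEq V]
variable {E : V → V → Prop} {S : Set V} {ω : V → V → ℂ} {lam : ℂ} {u : V → ℂ}
variable [DecidablePred (· ∈ S)]

lemma Bset_eq_iUnion_branch {i : V} :
    Bset E S i = ⋃ j : ↥S, {l : List V | IsBranchList E S i (j : V) l} := by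
  ext l
  constructor
  · rintro ⟨hch, hh, ⟨tne, tch, tnd, tdrop, jS, hjS, tlast⟩, hnd⟩
    have hlne : l ≠ [] := by rintro rfl; simp at hh
    obtain ⟨b, t, rfl⟩ := List.exists_cons_of_ne_nil hlne
    obtain rfl : b = i := by injection hh
    obtain ⟨c, t', rfl⟩ := List.exists_cons_of_ne_nil (by simpa using tne : t ≠ [])
    refine Set.mem_iUnion.mpr ⟨⟨jS, hjS⟩, by simp, hch, rfl, ?_, by simpa using tnd, ?_, ?_⟩
    · rw [List.getLast?_cons_cons]; simpa using tlast
    · rw [List.dropLast_cons₂]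
      exact List.nodup_cons.mpr ⟨by simpa using hnd,
        (by simpa using tnd : (c :: t').Nodup).sublist (List.dropLast_sublist _)⟩
    · simpa using tdrop
  · intro hl
    obtain ⟨⟨jv, hjv⟩, hlen, hch, hh, hlast, htnd, hdnd, hint⟩ := Set.mem_iUnion.mp hl
    have hlne : l ≠ [] := by rintro rfl; simp at hh
    obtain ⟨b, t, rfl⟩ := List.exists_cons_of_ne_nil hlne
    obtain rfl : b = i := by injection hh
    have htne : t ≠ [] := by rintro rfl; simp at hlen
    obtain ⟨c, t', rfl⟩ := List.exists_cons_of_ne_nil htne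
    rw [List.dropLast_cons₂] at hdnd
    refine ⟨hch, rfl, ⟨by simp, hch.tail, by simpa using htnd, by simpa using hint,
      jv, hjv, by simpa using hlast⟩, by simpa using (List.nodup_cons.mp hdnd).1⟩

lemma branch_disjoint (i : V) :
    Pairwise (Function.onFun _root_.Disjoint fun j : ↥S => {l : List V | IsBranchList E S i (j : V) l}) := by
  intro j1 j2 hne
  refine Set.disjoint_left.mpr fun l h1 h2 => hne ?_
  have := h1.2.2.2.1.symm.trans h2.2.2.2.1
  exact Subtype.ext (by injection this)

lemma sum_R {i : V} :
    ∑ j : ↥S, Rentry E S ω lam i (j : V) * u j = gfun E S ω lam u i := by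
  have hterm : ∀ j : ↥S, Rentry E S ω lam i (j : V) * u j
      = ∑ᶠ l ∈ {l : List V | IsBranchList E S i (j : V) l}, branchWeight ω lam l * uL u l := by
    intro j
    rw [Rentry, ← finsum_mem_mul_right (branch_finite E S i j)]
    refine finsum_mem_congr rfl fun l hl => ?_
    simp [uL, hl.2.2.2.1]
  rw [Finset.sum_congr rfl fun j _ => hterm j]
  rw [gfun, Bset_eq_iUnion_branch,
    finsum_mem_iUnion (branch_disjoint i) (fun j => branch_finite E S i j),
    finsum_eq_sum_of_fintype]

end Aux4

/-- Theorem 1 of the paper. If `M_G u = λ₀ u` with `u ≠ 0` and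
`S = {m+1,…,n}` is a `λ₀`-structural set, then `R_S(G,λ₀) u_S = λ₀ u_S` and `u_S ≠ 0`;
in particular `λ₀` is an eigenvalue of the reduced matrix. -/
theorem reduced_matrix_eigenvector
    {n m : ℕ} (E : Fin n → Fin n → Prop) (ω : Fin n → Fin n → ℂ)
    (hω : ∀ i j, ¬ E i j → ω i j = 0)
    (lam0 : ℂ) (u : Fin n → ℂ)
    (hu : (Matrix.of ω).mulVec u = lam0 • u) (hu0 : u ≠ 0)
    (S : Set (Fin n)) [DecidablePred (· ∈ S)] (hS : S = {i : Fin n | m ≤ (i : ℕ)})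
    (hstr : IsStructural E ω lam0 S) :
    (Matrix.of fun i j : ↥S => Rentry E S ω lam0 (i : Fin n) (j : Fin n)).mulVec
        (fun i : ↥S => u i) = lam0 • (fun i : ↥S => u i) ∧
      (fun i : ↥S => u i) ≠ 0 := by
  classical
  have hu' : ∀ k, ∑ j, ω k j * u j = lam0 * u k := by
    intro k
    have := congrFun hu k
    simpa [Matrix.mulVec, dotProduct] using this
  have hA := gfun_eq (u := u) hstr hω hu'
  constructor
  · funext i
    have h1 : (Matrix.of fun i j : ↥S => Rentry E S ω lam0 (i : Fin n) (j : Fin n)).mulVec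
        (fun i : ↥S => u i) i = ∑ j : ↥S, Rentry E S ω lam0 (i : Fin n) (j : Fin n) * u j := by
      simp [Matrix.mulVec, dotProduct]
    rw [h1, sum_R, gfun_expand hstr hω (i : Fin n) (fun j _ _ hjS => hA j hjS), if_pos i.2]
    have h2 := Finset.sum_erase_add Finset.univ (fun j => ω i j * u j)
      (Finset.mem_univ (i : Fin n))
    rw [h2, hu' i]
    simp
  · intro h0
    apply hu0
    funext k
    by_cases hk : k ∈ S
    · have := congrFun h0 ⟨k, hk⟩
      simpa using this
    · have hg : gfun E S ω lam0 u k = 0 := by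
        rw [gfun, finsum_mem_eq_finite_toFinset_sum _ (Bset_finite E S k)]
        refine Finset.sum_eq_zero fun l hl => ?_
        rw [Set.Finite.mem_toFinset] at hl
        obtain ⟨hch, hh, ⟨tne, tch, tnd, tdrop, jS, hjS, tlast⟩, hnd⟩ := hl
        have hlne : l ≠ [] := by rintro rfl; simp at hh
        obtain ⟨b, t, rfl⟩ := List.exists_cons_of_ne_nil hlne
        obtain ⟨c, t', rfl⟩ := List.exists_cons_of_ne_nil (by simpa using tne : t ≠ [])
        have hL : uL u ((b :: c :: t')) = u jS := by
          simp only [uL, List.getLast?_cons_cons]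
          rw [show (c :: t').getLast? = some jS from by simpa using tlast]
          rfl
        have hz : u jS = 0 := by simpa using congrFun h0 ⟨jS, hjS⟩
        rw [hL, hz, mul_zero]
      have hval := hA k hk
      rw [hg] at hval
      have hd : lam0 - ω k k ≠ 0 := sub_ne_zero.mpr (Ne.symm (hstr.2.2 k hk))
      have : u k = 0 := by
        rcases mul_eq_zero.mp hval.symm with h | h
        · exact absurd h hd
        · exact h
      simpa using this
end

section
/- Let G = (V,E,ω) be a finite weighted directed graph with vertex set V = {1,…,n} and weighted adjacency matrix M_G ∈ ℂⁿˣⁿ, let λ₀ ∈ ℂ, and let S ⊂ V be a λ₀-structural set of G. Then the restriction map u ↦ u_S = (u_i)_{i∈S} is a linear isomorphism from the eigenspace {u ∈ ℂⁿ : M_G u = λ₀ u} onto the eigenspace {v ∈ ℂ^S : R_S(G,λ₀) v = λ₀ v} of the reduced matrix. -/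
namespace IGR

open List

variable {n : ℕ} {E : Fin n → Fin n → Prop} {ω : Fin n → Fin n → ℂ} {lam0 : ℂ}
  {S : Set (Fin n)}

lemma exists_cons_cons {α : Type*} {l : List α} (h : 2 ≤ l.length) :
    ∃ a b t, l = a :: b :: t := by
  cases l with
  | nil => simp at h
  | cons a t =>
    cases t with
    | nil => simp at h
    | cons b t' => exact ⟨a, b, t', rfl⟩

lemma branch_finite (E : Fin n → Fin n → Prop) (S : Set (Fin n)) (i j : Fin n) :
    {l : List (Fin n) | IsBranchList E S i j l}.Finite := by
  apply (List.finite_length_le (Fin n) (n + 1)).subset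
  rintro l ⟨hlen, -, -, -, -, hnd, -⟩
  have h1 : l.dropLast.length ≤ n := by simpa using hnd.length_le_card
  have h2 : l.dropLast.length = l.length - 1 := List.length_dropLast
  simp only [Set.mem_setOf_eq]
  omega

lemma exists_prefix_getLast {α : Type*} {i : α} :
    ∀ {l : List α}, i ∈ l → ∃ p : List α, p <+: l ∧ p ≠ [] ∧ p.getLast? = some i := by
  intro l hl
  induction l with
  | nil => simp at hl
  | cons a t ih =>
    rcases eq_or_ne a i with rfl | hne
    · exact ⟨[a], ⟨t, rfl⟩, by simp, rfl⟩
    · have hit : i ∈ t := by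
        rcases List.mem_cons.mp hl with h | h
        · exact absurd h.symm hne
        · exact h
      obtain ⟨p, ⟨r, hr⟩, hpne, hpl⟩ := ih hit
      obtain ⟨b, p', rfl⟩ : ∃ b p', p = b :: p' := by
        cases p with
        | nil => exact absurd rfl hpne
        | cons b p' => exact ⟨b, p', rfl⟩
      exact ⟨a :: b :: p', ⟨r, by rw [← hr]; rfl⟩, by simp,
        by rwa [List.getLast?_cons_cons]⟩

lemma exists_dup_split {α : Type*} :
    ∀ {l : List α}, ¬ l.Nodup → ∃ (v : α) (l₁ l₂ l₃ : List α),
      l = l₁ ++ v :: l₂ ++ v :: l₃ := by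
  intro l
  induction l with
  | nil => intro h; exact absurd List.nodup_nil h
  | cons a t ih =>
    intro h
    by_cases ha : a ∈ t
    · obtain ⟨s, u, rfl⟩ := List.append_of_mem ha
      exact ⟨a, [], s, u, by simp⟩
    · have hnt : ¬ t.Nodup := fun hnd => h (List.nodup_cons.mpr ⟨ha, hnd⟩)
      obtain ⟨v, l₁, l₂, l₃, rfl⟩ := ih hnt
      exact ⟨v, a :: l₁, l₂, l₃, by simp⟩

lemma chain'_offP {α : Type*} {P : α → Prop} {E' : α → α → Prop}
    (hE' : ∀ a b, E' a b → P a ∧ P b) :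
    ∀ l : List α, l.Chain' E' → 2 ≤ l.length → ∀ v ∈ l, P v := by
  intro l
  induction l with
  | nil => simp
  | cons a t ih =>
    intro hch hlen v hv
    cases t with
    | nil => simp at hlen
    | cons b t' =>
      rw [List.Chain', List.isChain_cons_cons] at hch
      rcases List.mem_cons.mp hv with rfl | hv'
      · exact (hE' _ _ hch.1).1
      · cases t' with
        | nil =>
          have : v = b := by simpa using hv'
          subst this
          exact (hE' _ _ hch.1).2
        | cons c t'' => exact ih hch.2 (by simp) v hv'

lemma no_closed_walk (hstr : IsStructural E ω lam0 S) :
    ∀ (N : ℕ) (c : List (Fin n)), c.length ≤ N →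
      c.Chain' (fun a b => E a b ∧ a ≠ b) → 3 ≤ c.length →
      c.head? = c.getLast? → (∀ v ∈ c, v ∉ S) → False := by
  intro N
  induction N with
  | zero => intro c h1 _ h3 _ _; omega
  | succ N ih =>
    intro c hle hch h3 hcl hS
    by_cases hnd : c.dropLast.Nodup
    · obtain ⟨v, hv, hvS⟩ := hstr.2.1 c ⟨by omega, hch.imp fun _ _ h => h.1, hcl, hnd⟩ (by omega)
      exact hS v hv hvS
    · obtain ⟨v, l₁, l₂, l₃, hsplit⟩ := exists_dup_split hnd
      have hcne : c ≠ [] := by rintro rfl; simp at h3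
      have hc : c = l₁ ++ ((v :: l₂ ++ [v]) ++ (l₃ ++ [c.getLast hcne])) := by
        conv_lhs => rw [← List.dropLast_append_getLast hcne, hsplit]
        simp
      have hinfpf : l₁ ++ (v :: l₂ ++ [v]) ++ (l₃ ++ [c.getLast hcne]) = c := by
        conv_rhs => rw [hc]
        rw [List.append_assoc]
      have hinf : (v :: l₂ ++ [v]) <:+: c := ⟨l₁, l₃ ++ [c.getLast hcne], hinfpf⟩
      have hch' : (v :: l₂ ++ [v]).Chain' (fun a b => E a b ∧ a ≠ b) := hch.infix hinf
      cases l₂ with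
      | nil =>
        simp only [List.cons_append, List.nil_append, List.Chain', List.isChain_cons_cons] at hch'
        exact hch'.1.2 rfl
      | cons b l₂' =>
        have hlenc : c.length = l₁.length + l₂'.length + l₃.length + 4 := by
          rw [hc]; simp [List.length_append]; omega
        refine ih (v :: (b :: l₂') ++ [v]) (by simp; omega) hch' (by simp) ?_ ?_
        · rw [List.getLast?_concat]
          rfl
        · intro x hx
          exact hS x (hinf.subset hx)

lemma wf_aux (hstr : IsStructural E ω lam0 S) :
    WellFounded (fun m k : Fin n => k ∉ S ∧ m ∉ S ∧ m ≠ k ∧ E k m) := by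
  set r : Fin n → Fin n → Prop := fun m k => k ∉ S ∧ m ∉ S ∧ m ≠ k ∧ E k m with hrdef
  have htg : ∀ k, ¬ Relation.TransGen r k k := by
    intro k hk
    obtain ⟨m, hkm, hmk⟩ := Relation.TransGen.head'_iff.mp hk
    obtain ⟨l, hchain, hlast⟩ := List.exists_isChain_cons_of_relationReflTransGen hmk
    have hchain2 : List.Chain' r (k :: m :: l) := List.IsChain.cons_cons hkm hchain
    have hlne : l ≠ [] := by
      rintro rfl
      simp at hlast
      exact hkm.2.2.1 hlast.symm
    set w : List (Fin n) := (k :: m :: l).reverse with hw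
    have hch' : w.Chain' (flip r) := by
      rw [hw, List.Chain', List.isChain_reverse]
      exact hchain2
    refine no_closed_walk hstr w.length w le_rfl ?_ ?_ ?_ ?_
    · refine hch'.imp ?_
      rintro a b ⟨haS, hbS, hne, hE⟩
      exact ⟨hE, fun h => hne h.symm⟩
    · rw [hw]
      simp only [List.length_reverse, List.length_cons]
      have := List.length_pos_iff.mpr hlne
      omega
    · rw [hw, List.head?_reverse, List.getLast?_reverse, List.getLast?_cons_cons,
        List.getLast?_eq_getLast (by simp)]
      exact congrArg some hlast
    · refine chain'_offP (fun a b h => ⟨h.1, h.2.1⟩) w hch' ?_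
      rw [hw]; simp
  haveI : IsTrans (Fin n) (Relation.TransGen r) := ⟨fun _ _ _ => Relation.TransGen.trans⟩
  haveI : IsIrrefl (Fin n) (Relation.TransGen r) := ⟨htg⟩
  exact Subrelation.wf (fun {x y} h => Relation.TransGen.single h)
    (Finite.wellFounded_of_trans_of_irrefl _)

lemma branch_shape {i j : Fin n} {l : List (Fin n)} (h : IsBranchList E S i j l) :
    ∃ t : List (Fin n), l = i :: t ∧ t ≠ [] ∧ t.getLast? = some j := by
  obtain ⟨hlen, -, hh, hl, -, -, -⟩ := h
  obtain ⟨a, b, t', rfl⟩ := exists_cons_cons hlen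
  simp only [List.head?_cons, Option.some.injEq] at hh
  subst hh
  refine ⟨b :: t', rfl, by simp, ?_⟩
  rwa [List.getLast?_cons_cons] at hl

lemma branch_nodup {k j : Fin n} (hkS : k ∉ S) (hjS : j ∈ S) {l : List (Fin n)}
    (h : IsBranchList E S k j l) : l.Nodup := by
  obtain ⟨t, rfl, htne, htl⟩ := branch_shape h
  obtain ⟨-, -, -, -, htnd, hdnd, hint⟩ := h
  simp only [List.tail_cons] at htnd
  refine List.nodup_cons.mpr ⟨?_, htnd⟩
  intro hkt
  have ht : t.dropLast ++ [j] = t := List.dropLast_append_getLast? j htl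
  rcases List.mem_append.mp (ht ▸ hkt) with h' | h'
  · obtain ⟨b, t', rfl⟩ : ∃ b t', t = b :: t' := by
      cases t with
      | nil => exact absurd rfl htne
      | cons b t' => exact ⟨b, t', rfl⟩
    rw [List.dropLast_cons₂] at hdnd
    exact (List.nodup_cons.mp hdnd).1 h'
  · simp only [List.mem_singleton] at h'
    exact hkS (h' ▸ hjS)

lemma not_mem_dropLast (hstr : IsStructural E ω lam0 S)
    {i k j : Fin n} (hik : E i k) (hki : k ≠ i) (hkS : k ∉ S) (hjS : j ∈ S)
    {l : List (Fin n)} (hl : IsBranchList E S k j l) : i ∉ l.dropLast := by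
  intro hmem
  obtain ⟨t, rfl, htne, htl⟩ := branch_shape hl
  obtain ⟨-, hch, -, -, -, hdnd, hint⟩ := hl
  obtain ⟨b, t', rfl⟩ : ∃ b t', t = b :: t' := by
    cases t with
    | nil => exact absurd rfl htne
    | cons b t' => exact ⟨b, t', rfl⟩
  rw [List.dropLast_cons₂] at hmem hdnd
  -- all elements of (k :: (b::t').dropLast) are off S
  have hDS : ∀ v ∈ k :: (b :: t').dropLast, v ∉ S := by
    intro v hv
    rcases List.mem_cons.mp hv with rfl | hv'
    · exact hkS
    · exact hint v (by simpa using hv')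
  by_cases hiS : i ∈ S
  · exact hDS i hmem hiS
  -- build a cycle
  have hchd : (k :: (b :: t').dropLast).Chain' E := by
    refine hch.prefix ?_
    rw [← List.dropLast_cons₂]
    exact List.dropLast_prefix _
  obtain ⟨p, hp, hpne, hplast⟩ := exists_prefix_getLast hmem
  have hpnd : p.Nodup := hdnd.sublist hp.sublist
  obtain ⟨a, p', rfl⟩ : ∃ a p', p = a :: p' := by
    cases p with
    | nil => exact absurd rfl hpne
    | cons a p' => exact ⟨a, p', rfl⟩
  have hak : k = a := by
    obtain ⟨r, hr⟩ := hp
    have h' := congrArg List.head? hr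
    simpa using h'.symm
  subst hak
  have hp'ne : p' ≠ [] := by
    rintro rfl
    simp only [List.getLast?_singleton, Option.some.injEq] at hplast
    exact hki (hplast ▸ rfl)
  have hchp : (k :: p').Chain' E := hchd.prefix hp
  have hpd : (k :: p').dropLast ++ [i] = k :: p' := List.dropLast_append_getLast? i hplast
  have hnotin : i ∉ (k :: p').dropLast := by
    intro hin
    have := List.nodup_append'.mp (hpd ▸ hpnd)
    exact this.2.2 hin (by simp)
  have hcyc : IsCycleList E (i :: k :: p') := by
    refine ⟨by simp, ?_, ?_, ?_⟩
    · rw [List.Chain', List.isChain_cons_cons]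
      exact ⟨hik, hchp⟩
    · rw [List.getLast?_cons_cons, hplast]
      rfl
    · rw [show (i :: k :: p').dropLast = i :: (k :: p').dropLast by
        cases p' with
        | nil => exact absurd rfl hp'ne
        | cons x xs => rfl]
      exact List.nodup_cons.mpr ⟨hnotin, hpnd.sublist (List.dropLast_sublist _)⟩
  obtain ⟨v, hv, hvS⟩ := hstr.2.1 _ hcyc (by simpa using List.length_pos_iff.mpr hp'ne)
  rcases List.mem_cons.mp hv with rfl | hv'
  · exact hiS hvS
  · exact hDS v (hp.sublist.subset hv') hvS

lemma isBranchList_cons (hstr : IsStructural E ω lam0 S)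
    {i k j : Fin n} (hjS : j ∈ S) (hkS : k ∉ S) (hki : k ≠ i) (hik : E i k)
    {l : List (Fin n)} (hl : IsBranchList E S k j l) :
    IsBranchList E S i j (i :: l) := by
  have hnd : l.Nodup := branch_nodup hkS hjS hl
  have hnm : i ∉ l.dropLast := not_mem_dropLast hstr hik hki hkS hjS hl
  obtain ⟨t, rfl, htne, htl⟩ := branch_shape hl
  obtain ⟨hlen, hch, -, hgl, htnd, hdnd, hint⟩ := hl
  refine ⟨by simp, ?_, rfl, ?_, ?_, ?_, ?_⟩
  · rw [List.Chain', List.isChain_cons_cons]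
    exact ⟨hik, hch⟩
  · rwa [List.getLast?_cons_cons]
  · exact hnd
  · rw [show (i :: k :: t).dropLast = i :: (k :: t).dropLast by
      cases t with
      | nil => exact absurd rfl htne
      | cons x xs => rfl]
    exact List.nodup_cons.mpr ⟨hnm, hdnd⟩
  · intro v hv
    simp only [List.tail_cons] at hv
    obtain ⟨b, t', rfl⟩ : ∃ b t', t = b :: t' := by
      cases t with
      | nil => exact absurd rfl htne
      | cons b t' => exact ⟨b, t', rfl⟩
    rw [List.dropLast_cons₂] at hv
    rcases List.mem_cons.mp hv with rfl | hv'
    · exact hkS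
    · exact hint v (by simpa using hv')

lemma branch_tail {i j b : Fin n} {t : List (Fin n)}
    (h : IsBranchList E S i j (i :: b :: t)) (ht : t ≠ []) :
    IsBranchList E S b j (b :: t) ∧ b ∉ S ∧ b ≠ i := by
  obtain ⟨-, hch, -, hgl, htnd, hdnd, hint⟩ := h
  rw [List.Chain', List.isChain_cons_cons] at hch
  simp only [List.tail_cons] at htnd hint
  have hdd : (i :: b :: t).dropLast = i :: (b :: t).dropLast := rfl
  rw [hdd] at hdnd
  have hdd2 : (b :: t).dropLast = b :: t.dropLast := by
    cases t with
    | nil => exact absurd rfl ht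
    | cons x xs => rfl
  have hbS : b ∉ S := hint b (by rw [hdd2]; simp)
  have hbi : b ≠ i := by
    have := (List.nodup_cons.mp hdnd).1
    rw [hdd2] at this
    intro hbi'
    exact this (hbi' ▸ List.mem_cons_self)
  refine ⟨⟨by have := List.length_pos_iff.mpr ht; simp; omega, hch.2, rfl, by rwa [List.getLast?_cons_cons] at hgl, ?_, ?_, ?_⟩, hbS, hbi⟩
  · exact (List.nodup_cons.mp htnd).2
  · exact (List.nodup_cons.mp hdnd).2
  · intro v hv
    simp only [List.tail_cons] at hv
    refine hint v ?_
    rw [hdd2]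
    exact List.mem_cons_of_mem _ hv

lemma branchWeight_cons (ω : Fin n → Fin n → ℂ) (lam0 : ℂ) (i k : Fin n)
    {l : List (Fin n)} (h2 : 2 ≤ l.length) (hh : l.head? = some k) :
    branchWeight ω lam0 (i :: l) = ω i k * branchWeight ω lam0 l / (lam0 - ω k k) := by
  obtain ⟨a, b, t, rfl⟩ := exists_cons_cons h2
  simp only [List.head?_cons, Option.some.injEq] at hh
  subst hh
  rfl

lemma Rentry_toFinset (E : Fin n → Fin n → Prop) (S : Set (Fin n)) (ω : Fin n → Fin n → ℂ)
    (lam0 : ℂ) (i j : Fin n) :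
    Rentry E S ω lam0 i j
      = ∑ l ∈ (branch_finite E S i j).toFinset, branchWeight ω lam0 l :=
  finsum_mem_eq_finite_toFinset_sum _ _

lemma Rentry_key [DecidablePred (· ∈ S)] (hstr : IsStructural E ω lam0 S)
    (hω : ∀ i j, ¬ E i j → ω i j = 0) {j : Fin n} (hjS : j ∈ S) (i : Fin n) :
    Rentry E S ω lam0 i j = ω i j +
      ∑ k ∈ Finset.univ.filter (fun k => k ∉ S ∧ k ≠ i),
        ω i k * Rentry E S ω lam0 k j / (lam0 - ω k k) := by
  classical
  rw [Rentry_toFinset,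
    ← Finset.sum_filter_add_sum_filter_not ((branch_finite E S i j).toFinset)
      (fun l => l.length = 2)]
  have part1 : ∑ l ∈ Finset.filter (fun l => l.length = 2) (branch_finite E S i j).toFinset,
      branchWeight ω lam0 l = ω i j := by
    have hset : Finset.filter (fun l => l.length = 2) (branch_finite E S i j).toFinset
        = if E i j then {[i, j]} else ∅ := by
      ext l
      simp only [Finset.mem_filter, Set.Finite.mem_toFinset, Set.mem_setOf_eq]
      constructor
      · rintro ⟨hb, hlen⟩
        obtain ⟨a, b, t, rfl⟩ := exists_cons_cons hb.1
        have hte : t = [] := by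
          simp only [List.length_cons] at hlen
          simpa using hlen
        subst hte
        obtain ⟨-, hch, hh, hgl, -, -, -⟩ := hb
        rw [List.Chain', List.isChain_cons_cons] at hch
        simp only [List.head?_cons, Option.some.injEq] at hh
        rw [List.getLast?_cons_cons, List.getLast?_singleton] at hgl
        simp only [Option.some.injEq] at hgl
        subst hh; subst hgl
        rw [if_pos hch.1]
        simp
      · intro hl
        by_cases hEij : E i j
        · rw [if_pos hEij] at hl
          simp only [Finset.mem_singleton] at hl
          subst hl
          exact ⟨⟨by simp, by simp [List.Chain', List.isChain_cons_cons, hEij], rfl,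
            by simp, by simp, by simp, by simp⟩, rfl⟩
        · rw [if_neg hEij] at hl
          simp at hl
    rw [hset]
    by_cases hEij : E i j
    · rw [if_pos hEij]
      simp [branchWeight]
    · rw [if_neg hEij]
      simp [hω i j hEij]
  have part2 : ∑ l ∈ Finset.filter (fun l => ¬ l.length = 2) (branch_finite E S i j).toFinset,
      branchWeight ω lam0 l
      = ∑ k ∈ Finset.univ.filter (fun k => k ∉ S ∧ k ≠ i),
          ω i k * Rentry E S ω lam0 k j / (lam0 - ω k k) := by
    rw [← Finset.sum_fiberwise_of_maps_to (g := fun l : List (Fin n) => l.tail.head?.getD i)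
      (t := Finset.univ.filter (fun k => k ∉ S ∧ k ≠ i)) ?_ (branchWeight ω lam0)]
    · refine Finset.sum_congr rfl ?_
      intro k hk
      simp only [Finset.mem_filter, Finset.mem_univ, true_and] at hk
      obtain ⟨hkS, hki⟩ := hk
      by_cases hik : E i k
      · rw [Rentry_toFinset, Finset.mul_sum, Finset.sum_div]
        refine Finset.sum_nbij' (fun l => l.tail) (fun l' => i :: l') ?_ ?_ ?_ ?_ ?_
        · -- maps into
          intro l hl
          simp only [Finset.mem_filter, Set.Finite.mem_toFinset, Set.mem_setOf_eq] at hl ⊢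
          obtain ⟨⟨hb, hlen2⟩, hhead⟩ := hl
          obtain ⟨t, rfl, htne, -⟩ := branch_shape hb
          obtain ⟨b, t', rfl⟩ : ∃ b t', t = b :: t' := by
            cases t with
            | nil => exact absurd rfl htne
            | cons b t' => exact ⟨b, t', rfl⟩
          have ht'ne : t' ≠ [] := by
            rintro rfl
            simp at hlen2
          simp only [List.tail_cons, List.head?_cons, Option.getD_some] at hhead
          subst hhead
          exact (branch_tail hb ht'ne).1
        · -- reverse maps into
          intro l' hl'
          simp only [Set.Finite.mem_toFinset, Set.mem_setOf_eq] at hl'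
          simp only [Finset.mem_filter, Set.Finite.mem_toFinset, Set.mem_setOf_eq]
          obtain ⟨t, rfl, htne, -⟩ := branch_shape hl'
          refine ⟨⟨isBranchList_cons hstr hjS hkS hki hik hl', ?_⟩, rfl⟩
          intro hcon
          rw [List.length_cons, List.length_cons] at hcon
          have h1 : 0 < t.length := List.length_pos_iff.mpr htne
          omega
        · intro l hl
          simp only [Finset.mem_filter, Set.Finite.mem_toFinset, Set.mem_setOf_eq] at hl
          obtain ⟨⟨hb, -⟩, -⟩ := hl
          obtain ⟨t, rfl, -, -⟩ := branch_shape hb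
          rfl
        · intro l' _
          rfl
        · intro l hl
          simp only [Finset.mem_filter, Set.Finite.mem_toFinset, Set.mem_setOf_eq] at hl
          obtain ⟨⟨hb, hlen2⟩, hhead⟩ := hl
          obtain ⟨t, rfl, htne, -⟩ := branch_shape hb
          have h2t : 2 ≤ t.length := by
            have h1 : 1 ≤ t.length := by
              cases t with
              | nil => exact absurd rfl htne
              | cons x xs => simp
            rcases Nat.lt_or_ge t.length 2 with h | h
            · exfalso
              apply hlen2
              simp only [List.length_cons]
              omega
            · exact h
          have hth : t.head?.getD i = k := by simpa using hhead
          have hth? : t.head? = some k := by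
            cases t with
            | nil => exact absurd rfl htne
            | cons x xs => simpa using congrArg some hth
          exact branchWeight_cons ω lam0 i k h2t hth?
      · -- no edge from i to k
        have hempty : Finset.filter (fun l : List (Fin n) => l.tail.head?.getD i = k)
            (Finset.filter (fun l => ¬l.length = 2) (branch_finite E S i j).toFinset) = ∅ := by
          ext l
          simp only [Finset.mem_filter, Set.Finite.mem_toFinset, Set.mem_setOf_eq,
            Finset.notMem_empty, iff_false]
          rintro ⟨⟨hb, hlen2⟩, hhead⟩
          obtain ⟨t, rfl, htne, -⟩ := branch_shape hb
          obtain ⟨b, t', rfl⟩ : ∃ b t', t = b :: t' := by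
            cases t with
            | nil => exact absurd rfl htne
            | cons b t' => exact ⟨b, t', rfl⟩
          simp only [List.tail_cons, List.head?_cons, Option.getD_some] at hhead
          subst hhead
          have := hb.2.1
          rw [List.Chain', List.isChain_cons_cons] at this
          exact hik this.1
        rw [hempty, Finset.sum_empty, hω i k hik]
        simp
    · -- maps to
      intro l hl
      simp only [Finset.mem_filter, Set.Finite.mem_toFinset, Set.mem_setOf_eq] at hl
      obtain ⟨hb, hlen2⟩ := hl
      obtain ⟨t, rfl, htne, -⟩ := branch_shape hb
      obtain ⟨b, t', rfl⟩ : ∃ b t', t = b :: t' := by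
        cases t with
        | nil => exact absurd rfl htne
        | cons b t' => exact ⟨b, t', rfl⟩
      have ht'ne : t' ≠ [] := by
        rintro rfl
        simp at hlen2
      obtain ⟨-, hbS, hbi⟩ := branch_tail hb ht'ne
      simp only [Finset.mem_filter, Finset.mem_univ, true_and, List.tail_cons, List.head?_cons, Option.getD_some]
      exact ⟨hbS, hbi⟩
  rw [part1, part2]

noncomputable def Tmap (E : Fin n → Fin n → Prop) (S : Set (Fin n))
    (ω : Fin n → Fin n → ℂ) (lam0 : ℂ) [DecidablePred (· ∈ S)]
    (v : ↥S → ℂ) (i : Fin n) : ℂ :=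
  ∑ j : ↥S, Rentry E S ω lam0 i ↑j * v j

noncomputable def extMap (E : Fin n → Fin n → Prop) (S : Set (Fin n))
    (ω : Fin n → Fin n → ℂ) (lam0 : ℂ) [DecidablePred (· ∈ S)]
    (v : ↥S → ℂ) (i : Fin n) : ℂ :=
  if h : i ∈ S then v ⟨i, h⟩ else Tmap E S ω lam0 v i / (lam0 - ω i i)

lemma swap_sum [DecidablePred (· ∈ S)] (hstr : IsStructural E ω lam0 S)
    (hω : ∀ i j, ¬ E i j → ω i j = 0) (w : ↥S → ℂ) (i : Fin n) :
    ∑ k ∈ Finset.univ.filter (fun k => k ∉ S ∧ k ≠ i),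
        ω i k * Tmap E S ω lam0 w k / (lam0 - ω k k)
      = Tmap E S ω lam0 w i - ∑ j : ↥S, ω i ↑j * w j := by
  have h1 : Tmap E S ω lam0 w i = ∑ j : ↥S,
      (ω i ↑j + ∑ k ∈ Finset.univ.filter (fun k => k ∉ S ∧ k ≠ i),
        ω i k * Rentry E S ω lam0 k ↑j / (lam0 - ω k k)) * w j := by
    refine Finset.sum_congr rfl fun j _ => ?_
    rw [← Rentry_key hstr hω j.2 i]
  have h2 : ∑ k ∈ Finset.univ.filter (fun k => k ∉ S ∧ k ≠ i),
        ω i k * Tmap E S ω lam0 w k / (lam0 - ω k k)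
      = ∑ j : ↥S, (∑ k ∈ Finset.univ.filter (fun k => k ∉ S ∧ k ≠ i),
          ω i k * Rentry E S ω lam0 k ↑j / (lam0 - ω k k)) * w j := by
    calc ∑ k ∈ Finset.univ.filter (fun k => k ∉ S ∧ k ≠ i),
          ω i k * Tmap E S ω lam0 w k / (lam0 - ω k k)
        = ∑ k ∈ Finset.univ.filter (fun k => k ∉ S ∧ k ≠ i), ∑ j : ↥S,
            (ω i k * Rentry E S ω lam0 k ↑j / (lam0 - ω k k)) * w j := by
          refine Finset.sum_congr rfl fun k _ => ?_
          simp only [Tmap]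
          rw [Finset.mul_sum, Finset.sum_div]
          exact Finset.sum_congr rfl fun j _ => by ring
      _ = ∑ j : ↥S, ∑ k ∈ Finset.univ.filter (fun k => k ∉ S ∧ k ≠ i),
            (ω i k * Rentry E S ω lam0 k ↑j / (lam0 - ω k k)) * w j := Finset.sum_comm
      _ = ∑ j : ↥S, (∑ k ∈ Finset.univ.filter (fun k => k ∉ S ∧ k ≠ i),
            ω i k * Rentry E S ω lam0 k ↑j / (lam0 - ω k k)) * w j :=
          Finset.sum_congr rfl fun j _ => (Finset.sum_mul _ _ _).symm
  rw [h2, eq_sub_iff_add_eq, ← Finset.sum_add_distrib, h1]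
  exact Finset.sum_congr rfl fun j _ => by ring

lemma split_sum (S : Set (Fin n)) [DecidablePred (· ∈ S)] (ω : Fin n → Fin n → ℂ)
    (i : Fin n) (u : Fin n → ℂ) :
    ∑ k, ω i k * u k = (∑ j : ↥S, ω i ↑j * u ↑j) + ((if i ∈ S then 0 else ω i i * u i)
      + ∑ k ∈ Finset.univ.filter (fun k => k ∉ S ∧ k ≠ i), ω i k * u k) := by
  rw [← Finset.sum_filter_add_sum_filter_not Finset.univ (fun k => k ∈ S)
    (fun k => ω i k * u k)]
  congr 1
  · exact Finset.sum_subtype _ (by simp) _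
  · by_cases hiS : i ∈ S
    · rw [if_pos hiS, zero_add]
      refine Finset.sum_congr ?_ (fun _ _ => rfl)
      ext k
      simp only [Finset.mem_filter, Finset.mem_univ, true_and]
      exact ⟨fun h => ⟨h, fun e => h (e ▸ hiS)⟩, fun h => h.1⟩
    · rw [if_neg hiS]
      have hins : Finset.univ.filter (fun k => ¬ k ∈ S)
          = insert i (Finset.univ.filter (fun k => k ∉ S ∧ k ≠ i)) := by
        ext k
        simp only [Finset.mem_filter, Finset.mem_univ, true_and, Finset.mem_insert]
        constructor
        · intro h
          by_cases hk : k = i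
          · exact Or.inl hk
          · exact Or.inr ⟨h, hk⟩
        · rintro (rfl | ⟨h, -⟩)
          · exact hiS
          · exact h
      rw [hins, Finset.sum_insert (by simp)]

lemma keyG [DecidablePred (· ∈ S)] (hstr : IsStructural E ω lam0 S)
    (hω : ∀ i j, ¬ E i j → ω i j = 0) (v : ↥S → ℂ) (i : Fin n) :
    ∑ k, ω i k * extMap E S ω lam0 v k
      = Tmap E S ω lam0 v i + (if i ∈ S then 0 else ω i i * extMap E S ω lam0 v i) := by
  rw [split_sum S ω i (extMap E S ω lam0 v)]
  have e1 : ∑ j : ↥S, ω i ↑j * extMap E S ω lam0 v ↑j = ∑ j : ↥S, ω i ↑j * v j :=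
    Finset.sum_congr rfl fun j _ => by rw [extMap, dif_pos j.2, Subtype.coe_eta]
  have e2 : ∑ k ∈ Finset.univ.filter (fun k => k ∉ S ∧ k ≠ i),
        ω i k * extMap E S ω lam0 v k
      = ∑ k ∈ Finset.univ.filter (fun k => k ∉ S ∧ k ≠ i),
          ω i k * Tmap E S ω lam0 v k / (lam0 - ω k k) := by
    refine Finset.sum_congr rfl fun k hk => ?_
    simp only [Finset.mem_filter, Finset.mem_univ, true_and] at hk
    rw [extMap, dif_neg hk.1, mul_div_assoc]
  rw [e1, e2, swap_sum hstr hω]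
  ring

lemma extend_eigen [DecidablePred (· ∈ S)] (hstr : IsStructural E ω lam0 S)
    (hω : ∀ i j, ¬ E i j → ω i j = 0) (u : Fin n → ℂ)
    (hu : ∀ i, ∑ k, ω i k * u k = lam0 * u i) :
    ∀ i, i ∉ S → (lam0 - ω i i) * u i = Tmap E S ω lam0 (fun j : ↥S => u ↑j) i := by
  intro i
  refine (wf_aux hstr).induction
    (C := fun x => x ∉ S → (lam0 - ω x x) * u x = Tmap E S ω lam0 (fun j : ↥S => u ↑j) x)
    i ?_
  intro x IH hxS
  have hx := hu x
  rw [split_sum S ω x u] at hx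
  have e2 : ∑ k ∈ Finset.univ.filter (fun k => k ∉ S ∧ k ≠ x), ω x k * u k
      = ∑ k ∈ Finset.univ.filter (fun k => k ∉ S ∧ k ≠ x),
          ω x k * Tmap E S ω lam0 (fun j : ↥S => u ↑j) k / (lam0 - ω k k) := by
    refine Finset.sum_congr rfl fun k hk => ?_
    simp only [Finset.mem_filter, Finset.mem_univ, true_and] at hk
    by_cases hxk : E x k
    · have hIH := IH k ⟨hxS, hk.1, hk.2, hxk⟩ hk.1
      have hd : lam0 - ω k k ≠ 0 := sub_ne_zero.mpr fun h => hstr.2.2 k hk.1 h.symm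
      rw [mul_div_assoc, ← hIH, mul_div_cancel_left₀ _ hd]
    · simp [hω x k hxk]
  rw [if_neg hxS, e2, swap_sum hstr hω] at hx
  try beta_reduce at hx
  linear_combination -hx

end IGR

/-- For a `λ₀`-structural set `S`, the restriction map `u ↦ u_S` is a
linear isomorphism from the eigenspace `{u : M_G u = λ₀ u}` onto the eigenspace
`{v : R_S(G,λ₀) v = λ₀ v}` of the reduced matrix. -/
theorem restriction_eigenspace_linear_iso
    {n : ℕ} (E : Fin n → Fin n → Prop) (ω : Fin n → Fin n → ℂ)
    (hω : ∀ i j, ¬ E i j → ω i j = 0)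
    (lam0 : ℂ) (S : Set (Fin n)) [DecidablePred (· ∈ S)]
    (hstr : IsStructural E ω lam0 S) :
    ∃ e : ↥(Module.End.eigenspace (Matrix.mulVecLin (Matrix.of ω)) lam0) ≃ₗ[ℂ]
        ↥(Module.End.eigenspace
            (Matrix.mulVecLin (Matrix.of fun i j : ↥S =>
              Rentry E S ω lam0 (i : Fin n) (j : Fin n))) lam0),
      ∀ u, (e u : ↥S → ℂ) = fun i : ↥S => (u : Fin n → ℂ) i := by

  classical
  have hden : ∀ k : Fin n, k ∉ S → lam0 - ω k k ≠ 0 := fun k hk =>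
    sub_ne_zero.mpr fun h => hstr.2.2 k hk h.symm
  have memM : ∀ u : Fin n → ℂ,
      u ∈ Module.End.eigenspace (Matrix.mulVecLin (Matrix.of ω)) lam0
        ↔ ∀ i, ∑ k, ω i k * u k = lam0 * u i := by
    intro u
    rw [Module.End.mem_eigenspace_iff]
    constructor
    · intro h i
      have h' := congrFun h i
      simpa [Matrix.mulVecLin_apply, Matrix.mulVec, dotProduct] using h'
    · intro h
      funext i
      simpa [Matrix.mulVecLin_apply, Matrix.mulVec, dotProduct] using h i
  have memR : ∀ v : ↥S → ℂ,
      v ∈ Module.End.eigenspace (Matrix.mulVecLin (Matrix.of fun i j : ↥S =>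
          Rentry E S ω lam0 (i : Fin n) (j : Fin n))) lam0
        ↔ ∀ i : ↥S, IGR.Tmap E S ω lam0 v ↑i = lam0 * v i := by
    intro v
    rw [Module.End.mem_eigenspace_iff]
    constructor
    · intro h i
      have h' := congrFun h i
      simpa [Matrix.mulVecLin_apply, Matrix.mulVec, dotProduct, IGR.Tmap]
        using h'
    · intro h
      funext i
      simpa [Matrix.mulVecLin_apply, Matrix.mulVec, dotProduct, IGR.Tmap]
        using h i
  let ρ : (Fin n → ℂ) →ₗ[ℂ] (↥S → ℂ) := LinearMap.funLeft ℂ ℂ (fun j : ↥S => (j : Fin n))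
  let γL : (↥S → ℂ) →ₗ[ℂ] (Fin n → ℂ) :=
    { toFun := IGR.extMap E S ω lam0
      map_add' := by
        intro v w
        funext i
        by_cases h : i ∈ S
        · simp [IGR.extMap, h]
        · simp only [IGR.extMap, IGR.Tmap, dif_neg h, Pi.add_apply]
          rw [← add_div, ← Finset.sum_add_distrib]
          congr 1
          exact Finset.sum_congr rfl fun j _ => by ring
      map_smul' := by
        intro c v
        funext i
        by_cases h : i ∈ S
        · simp [IGR.extMap, h]
        · simp only [IGR.extMap, IGR.Tmap, dif_neg h, Pi.smul_apply, smul_eq_mul,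
            RingHom.id_apply]
          rw [← mul_div_assoc, Finset.mul_sum]
          congr 1
          exact Finset.sum_congr rfl fun j _ => by ring }
  have hrestrict : ∀ (v : ↥S → ℂ) (j : ↥S), IGR.extMap E S ω lam0 v ↑j = v j := by
    intro v j
    simp [IGR.extMap, j.2]
  have hext_eq : ∀ u : Fin n → ℂ, (∀ i, ∑ k, ω i k * u k = lam0 * u i) →
      IGR.extMap E S ω lam0 (fun j : ↥S => u ↑j) = u := by
    intro u hu
    funext i
    by_cases h : i ∈ S
    · simp [IGR.extMap, h]
    · simp only [IGR.extMap, dif_neg h]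
      rw [← IGR.extend_eigen hstr hω u hu i h, mul_div_cancel_left₀ _ (hden i h)]
  have hfwd : ∀ u : Fin n → ℂ, u ∈ Module.End.eigenspace (Matrix.mulVecLin (Matrix.of ω)) lam0 →
      (fun j : ↥S => u ↑j) ∈ Module.End.eigenspace (Matrix.mulVecLin (Matrix.of fun i j : ↥S =>
          Rentry E S ω lam0 (i : Fin n) (j : Fin n))) lam0 := by
    intro u hu
    refine (memR _).mpr fun i => ?_
    have hu' := (memM u).mp hu
    have h1 := IGR.keyG hstr hω (fun j : ↥S => u ↑j) ↑i
    rw [if_pos i.2, add_zero] at h1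
    have h2 := hext_eq u hu'
    calc IGR.Tmap E S ω lam0 (fun j : ↥S => u ↑j) ↑i
        = ∑ k, ω ↑i k * IGR.extMap E S ω lam0 (fun j : ↥S => u ↑j) k := h1.symm
      _ = ∑ k, ω ↑i k * u k := by rw [h2]
      _ = lam0 * u ↑i := hu' ↑i
  have hbwd : ∀ v : ↥S → ℂ,
      v ∈ Module.End.eigenspace (Matrix.mulVecLin (Matrix.of fun i j : ↥S =>
          Rentry E S ω lam0 (i : Fin n) (j : Fin n))) lam0 →
      IGR.extMap E S ω lam0 v ∈
        Module.End.eigenspace (Matrix.mulVecLin (Matrix.of ω)) lam0 := by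
    intro v hv
    have hv' := (memR v).mp hv
    refine (memM _).mpr fun i => ?_
    have h1 := IGR.keyG hstr hω v i
    by_cases h : i ∈ S
    · rw [if_pos h, add_zero] at h1
      rw [h1]
      have he : IGR.extMap E S ω lam0 v i = v ⟨i, h⟩ := by simp [IGR.extMap, h]
      rw [he]
      exact hv' ⟨i, h⟩
    · rw [if_neg h] at h1
      rw [h1]
      have he : IGR.extMap E S ω lam0 v i
          = IGR.Tmap E S ω lam0 v i / (lam0 - ω i i) := by simp [IGR.extMap, h]
      rw [he]
      have hd := hden i h
      field_simp
      ring
  refine ⟨LinearEquiv.ofLinear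
    (LinearMap.codRestrict _ (ρ.comp (Module.End.eigenspace
        (Matrix.mulVecLin (Matrix.of ω)) lam0).subtype) (fun u => hfwd ↑u u.2))
    (LinearMap.codRestrict _ (γL.comp (Module.End.eigenspace
        (Matrix.mulVecLin (Matrix.of fun i j : ↥S =>
          Rentry E S ω lam0 (i : Fin n) (j : Fin n))) lam0).subtype)
      (fun v => hbwd ↑v v.2))
    ?_ ?_, fun u => rfl⟩
  · refine LinearMap.ext fun v => Subtype.ext (funext fun j => ?_)
    exact hrestrict ↑v j
  · refine LinearMap.ext fun u => Subtype.ext ?_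
    exact hext_eq ↑u ((memM ↑u).mp u.2)
end

section
/- Let G = (V,E,ω) be a finite weighted directed graph whose weighted adjacency matrix M_G = (p_{ij})_{i,j∈V} is row-stochastic (all p_{ij} ≥ 0 and Σ_j p_{ij} = 1 for every i), let S ⊂ V be a 1-structural set of G with p_{ii} = 0 for all i ∈ V∖S, and let q = (q_i)_{i∈V} be a stationary distribution of M_G, i.e. q_i ≥ 0, Σ_{i∈V} q_i = 1 and Σ_{i∈V} q_i p_{ij} = q_j for all j. Then Σ_{k∈S} q_k > 0, and the vector q_S = (q_j / Σ_{k∈S} q_k)_{j∈S} is a stationary distribution of the reduced matrix R_S(G) = R_S(G,1), i.e. Σ_{i∈S} (q_S)_i · R_{ij}(G,S,1) = (q_S)_j for all j ∈ S. -/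
set_option linter.unusedSectionVars false

namespace SDR
variable {V : Type*} [Fintype V]

attribute [local instance] Classical.propDecidable

/-- Product of edge weights along a list, with `1` for lists of length `≤ 1`. -/
noncomputable def wgt (ω : V → V → ℝ) : List V → ℝ
  | [] => 1
  | [_] => 1
  | a :: b :: t => ω a b * wgt ω (b :: t)

@[simp] lemma wgt_nil (ω : V → V → ℝ) : wgt ω [] = 1 := rfl
@[simp] lemma wgt_single (ω : V → V → ℝ) (a : V) : wgt ω [a] = 1 := rfl
@[simp] lemma wgt_cons_cons (ω : V → V → ℝ) (a b : V) (t : List V) :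
    wgt ω (a :: b :: t) = ω a b * wgt ω (b :: t) := rfl

lemma wgt_concat (ω : V → V → ℝ) (j d : V) :
    ∀ (l : List V), l ≠ [] → wgt ω (l ++ [j]) = wgt ω l * ω (l.getLastD d) j
  | [], h => absurd rfl h
  | [a], _ => by simp
  | a :: b :: t, _ => by
    have ih := wgt_concat ω j d (b :: t) (by simp)
    simp only [List.cons_append, wgt_cons_cons] at *
    rw [ih]
    simp only [List.getLastD_cons]
    ring

lemma chain'_of_wgt_ne (ω : V → V → ℝ) :
    ∀ l : List V, wgt ω l ≠ 0 → l.Chain' (fun a b => ω a b ≠ 0)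
  | [], _ => List.isChain_nil
  | [a], _ => List.isChain_singleton a
  | a :: b :: t, h => by
    rw [wgt_cons_cons] at h
    unfold List.Chain'
    rw [List.isChain_cons_cons]
    exact ⟨left_ne_zero_of_mul h, chain'_of_wgt_ne ω (b :: t) (right_ne_zero_of_mul h)⟩

lemma branchWeight_eq_wgt (ω : V → V → ℝ) :
    ∀ l : List V, (∀ v ∈ l.tail.dropLast, ω v v = 0) → 2 ≤ l.length →
      branchWeight ω 1 l = wgt ω l
  | [], _, h => by simp at h
  | [_], _, h => by simp at h
  | [i, j], _, _ => by
    show ω i j = ω i j * wgt ω [j]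
    simp
  | i :: j :: k :: t, h, _ => by
    have hj : ω j j = 0 := h j (by simp)
    have ih := branchWeight_eq_wgt ω (j :: k :: t)
      (fun v hv => h v (by simp at hv ⊢; tauto)) (by simp)
    show ω i j * branchWeight ω 1 (j :: k :: t) / (1 - ω j j) = _
    rw [hj, ih]
    simp only [wgt_cons_cons]
    ring

lemma nodup_of_chain {E : V → V → Prop} {ω : V → V → ℝ} {S : Set V}
    (hω : ∀ i j, ¬ E i j → ω i j = 0)
    (hstr : IsStructural E ω 1 S) (hdiag : ∀ i, i ∉ S → ω i i = 0)
    (l : List V) (hc : l.Chain' (fun a b => ω a b ≠ 0)) (hS : ∀ v ∈ l, v ∉ S) :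
    l.Nodup := by
  by_contra hnd
  have hne : l ≠ [] := by rintro rfl; exact hnd List.nodup_nil
  obtain ⟨v0, hv0⟩ : ∃ v, v ∈ l := List.exists_mem_of_ne_nil l hne
  set a : ℕ → V := fun k => l.getD k v0 with ha
  have hak : ∀ (k : ℕ) (h : k < l.length), a k = l.get ⟨k, h⟩ := by
    intro k h
    simp only [ha]
    rw [List.getD_eq_getElem l v0 h, List.get_eq_getElem]
  have hmem : ∀ k, k < l.length → a k ∈ l := by
    intro k h; rw [hak k h]; exact List.get_mem l ⟨k, h⟩
  have hstep : ∀ k, k + 1 < l.length → ω (a k) (a (k + 1)) ≠ 0 := by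
    intro k hk
    have h2 := List.isChain_iff_getElem.1 hc k (by omega)
    rw [hak k (by omega), hak (k + 1) hk]
    exact h2
  set P : ℕ → Prop := fun d => 0 < d ∧ ∃ p, p + d < l.length ∧ a p = a (p + d) with hPdef
  have hP : ∃ d, P d := by
    rw [List.nodup_iff_injective_get] at hnd
    simp only [Function.Injective] at hnd
    push_neg at hnd
    obtain ⟨x, y, hxy, hnexy⟩ := hnd
    have key : ∀ (x y : Fin l.length), (x : ℕ) < (y : ℕ) → l.get x = l.get y → ∃ d, P d := by
      intro x y hlt heq
      refine ⟨(y : ℕ) - (x : ℕ), by omega, (x : ℕ), by omega, ?_⟩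
      have e : (x : ℕ) + ((y : ℕ) - (x : ℕ)) = (y : ℕ) := by omega
      rw [e, hak x x.isLt, hak y y.isLt]
      simpa using heq
    have hne' : (x : ℕ) ≠ (y : ℕ) := fun h => hnexy (Fin.ext h)
    rcases Nat.lt_or_ge (x : ℕ) (y : ℕ) with h | h
    · exact key x y h hxy
    · exact key y x (by omega) hxy.symm
  set d0 := Nat.find hP with hd0def
  obtain ⟨hd0pos, p, hplen, hpa⟩ := Nat.find_spec hP
  rw [← hd0def] at hd0pos hplen hpa
  set m : List V := (List.range (d0 + 1)).map (fun k => a (p + k)) with hm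
  have hmlen : m.length = d0 + 1 := by simp [hm]
  have hhead : m.head? = some (a p) := by
    rw [hm, List.range_succ_eq_map]
    simp
  have hlast : m.getLast? = some (a (p + d0)) := by
    rw [hm, List.range_succ]
    simp
  have hdrop : m.dropLast = (List.range d0).map (fun k => a (p + k)) := by
    rw [hm, List.range_succ]
    simp
  have hchain : m.Chain' E := by
    rw [hm]
    unfold List.Chain'
    rw [List.isChain_map, List.isChain_range_succ]
    intro k hk
    by_contra hE
    have e : p + (k + 1) = (p + k) + 1 := by omega
    rw [e] at hE
    exact hstep (p + k) (by omega) (hω _ _ fun h => hE (by simpa using h))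
  have hnodupd : m.dropLast.Nodup := by
    rw [hdrop]
    refine List.Nodup.map_on ?_ List.nodup_range
    intro x hx y hy hxy
    simp only [List.mem_range] at hx hy
    by_contra hnexy
    have key : ∀ x y : ℕ, x < y → y < d0 → a (p + x) = a (p + y) → False := by
      intro x y hlt hyd heq
      have hPd : P (y - x) := by
        refine ⟨by omega, p + x, by omega, ?_⟩
        have e : p + x + (y - x) = p + y := by omega
        rw [e]; exact heq
      exact Nat.find_min hP (by omega) hPd
    rcases Nat.lt_or_ge x y with h | h
    · exact key x y h hy hxy
    · exact key y x (by omega) hx hxy.symm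
  have hmS : ∀ v ∈ m, v ∉ S := by
    intro v hv
    rw [hm] at hv
    simp only [List.mem_map, List.mem_range] at hv
    obtain ⟨k, hk, rfl⟩ := hv
    exact hS _ (hmem (p + k) (by omega))
  by_cases h1 : d0 = 1
  · have hst := hstep p (by omega)
    rw [h1] at hpa
    rw [hpa] at hst
    exact hst (hdiag _ (hS _ (hmem (p + 1) (by omega))))
  · have hcyc : IsCycleList E m :=
      ⟨by rw [hmlen]; omega, hchain, by rw [hhead, hlast, hpa], hnodupd⟩
    obtain ⟨v, hvm, hvS⟩ := hstr.2.1 m hcyc (by rw [hmlen]; omega)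
    exact hmS v hvm hvS

/-- Finset of lists of length `n+1` ending at `j` with all but the last vertex off `S`. -/
noncomputable def Lset (S : Set V) (n : ℕ) (j : V) : Finset (List V) :=
  (List.finite_length_eq V (n + 1)).toFinset.filter
    (fun l => l.getLast? = some j ∧ ∀ v ∈ l.dropLast, v ∉ S)

lemma mem_Lset {S : Set V} {n : ℕ} {j : V} {l : List V} :
    l ∈ Lset S n j ↔ l.length = n + 1 ∧ l.getLast? = some j ∧ ∀ v ∈ l.dropLast, v ∉ S := by
  simp [Lset, Set.Finite.mem_toFinset, and_assoc]

/-- The off-`S` vertices as a finset. -/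
noncomputable def offS (S : Set V) : Finset V := Finset.univ.filter (· ∉ S)

@[simp] lemma mem_offS {S : Set V} {i : V} : i ∈ offS S ↔ i ∉ S := by
  simp [offS]

/-- Iterated propagation of a vector through off-`S` vertices. -/
noncomputable def iter (ω : V → V → ℝ) (S : Set V) (z : V → ℝ) : ℕ → V → ℝ
  | 0 => z
  | n + 1 => fun j => ∑ i ∈ offS S, iter ω S z n i * ω i j

lemma iter_eq_zero (ω : V → V → ℝ) (S : Set V) {z : V → ℝ} (hz : ∀ v, z v = 0) :
    ∀ n j, iter ω S z n j = 0
  | 0, j => hz j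
  | n + 1, j => by
    show (∑ i ∈ offS S, iter ω S z n i * ω i j) = 0
    refine Finset.sum_eq_zero fun i _ => by rw [iter_eq_zero ω S hz n i, zero_mul]

lemma iter_eq (ω : V → V → ℝ) (S : Set V) (z : V → ℝ) :
    ∀ (n : ℕ) (j : V), iter ω S z n j = ∑ l ∈ Lset S n j, z (l.headD j) * wgt ω l
  | 0, j => by
    have h : Lset S 0 j = {[j]} := by
      ext l
      rw [mem_Lset]
      constructor
      · rintro ⟨hlen, hlast, -⟩
        match l, hlen with
        | [a], _ =>
          simp only [List.getLast?_singleton, Option.some.injEq] at hlast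
          simp [hlast]
      · rintro h
        simp only [Finset.mem_singleton] at h
        subst h
        simp
    rw [h]
    simp [iter]
  | n + 1, j => by
    show (∑ i ∈ offS S, iter ω S z n i * ω i j) = _
    have hIH : ∀ i, iter ω S z n i = ∑ l ∈ Lset S n i, z (l.headD i) * wgt ω l :=
      fun i => iter_eq ω S z n i
    calc (∑ i ∈ offS S, iter ω S z n i * ω i j)
        = ∑ i ∈ offS S, ∑ l ∈ Lset S n i, z (l.headD i) * wgt ω l * ω i j := by
          refine Finset.sum_congr rfl fun i _ => ?_
          rw [hIH i, Finset.sum_mul]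
      _ = ∑ p ∈ (offS S).sigma (fun i => Lset S n i),
            z (p.2.headD p.1) * wgt ω p.2 * ω p.1 j := by
          rw [Finset.sum_sigma]
      _ = ∑ l ∈ Lset S (n + 1) j, z (l.headD j) * wgt ω l := by
          refine Finset.sum_nbij' (fun p => p.2 ++ [j])
            (fun l => ⟨l.dropLast.getLast?.getD j, l.dropLast⟩) ?_ ?_ ?_ ?_ ?_
          · rintro ⟨i, l⟩ hp
            simp only [Finset.mem_sigma, mem_offS, mem_Lset] at hp
            obtain ⟨hiS, hlen, hlast, hoff⟩ := hp
            have hlne : l ≠ [] := by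
              intro h; rw [h] at hlen; simp at hlen
            rw [mem_Lset]
            refine ⟨by simp [hlen], by simp, ?_⟩
            rw [List.dropLast_concat]
            intro v hv
            rw [← List.dropLast_append_getLast hlne] at hv
            rcases List.mem_append.1 hv with h | h
            · exact hoff v h
            · have : v = l.getLast hlne := by simpa using h
              have hi : l.getLast hlne = i := by
                have := List.getLast?_eq_getLast hlne
                rw [this] at hlast
                exact Option.some.injEq _ _ ▸ (by simpa using hlast)
              rw [this, hi]; exact hiS
          · intro l hl
            rw [mem_Lset] at hl
            obtain ⟨hlen, hlast, hoff⟩ := hl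
            have hdne : l.dropLast ≠ [] := by
              have : l.dropLast.length = n + 1 := by
                rw [List.length_dropLast, hlen]
                omega
              intro h; rw [h] at this; simp at this
            have hgl := List.getLast?_eq_getLast hdne
            simp only [Finset.mem_sigma, mem_offS, mem_Lset]
            refine ⟨?_, ?_, ?_, ?_⟩
            · rw [hgl]
              simpa using hoff _ (List.getLast_mem hdne)
            · rw [List.length_dropLast, hlen]
              omega
            · rw [hgl]; simp
            · intro v hv
              exact hoff v (List.dropLast_subset _ hv)
          · rintro ⟨i, l⟩ hp
            simp only [Finset.mem_sigma, mem_offS, mem_Lset] at hp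
            obtain ⟨hiS, hlen, hlast, hoff⟩ := hp
            have hlne : l ≠ [] := by
              intro h; rw [h] at hlen; simp at hlen
            have h1 : (l ++ [j]).dropLast = l := List.dropLast_concat ..
            refine Sigma.ext ?_ ?_
            · simp only [h1]
              rw [hlast]
              rfl
            · simp [h1]
          · intro l hl
            rw [mem_Lset] at hl
            obtain ⟨hlen, hlast, hoff⟩ := hl
            exact List.dropLast_append_getLast? j hlast
          · rintro ⟨i, l⟩ hp
            simp only [Finset.mem_sigma, mem_offS, mem_Lset] at hp
            obtain ⟨hiS, hlen, hlast, hoff⟩ := hp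
            have hlne : l ≠ [] := by
              intro h; rw [h] at hlen; simp at hlen
            have hgld : l.getLastD i = i := by
              rw [List.getLastD_eq_getLast?, hlast]; rfl
            rw [wgt_concat ω j i l hlne, hgld]
            have hhd : (l ++ [j]).headD j = l.headD i := by
              match l, hlne with
              | a :: t, _ => simp
            rw [hhd]
            ring

end SDR


/-- Proposition 3 of the paper. If `M_G` is row-stochastic, `S` is a
`1`-structural set with zero diagonal weights off `S`, and `q` is a stationary
distribution of `M_G`, then `Σ_{k∈S} q_k > 0` and `q_S = (q_j / Σ_{k∈S} q_k)_{j∈S}` is a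
stationary distribution of the reduced matrix `R_S(G) = R_S(G,1)`. -/
theorem stationary_distribution_of_reduced
    {V : Type*} [Fintype V]
    (E : V → V → Prop) (ω : V → V → ℝ)
    (hω : ∀ i j, ¬ E i j → ω i j = 0)
    (hnonneg : ∀ i j, 0 ≤ ω i j)
    (hrow : ∀ i, ∑ j, ω i j = 1)
    (S : Set V) (hstr : IsStructural E ω 1 S)
    (hdiag : ∀ i, i ∉ S → ω i i = 0)
    (q : V → ℝ) (hq0 : ∀ i, 0 ≤ q i) (hq1 : ∑ i, q i = 1)
    (hqstat : ∀ j, ∑ i, q i * ω i j = q j) :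
    0 < (∑ᶠ k ∈ S, q k) ∧
      ∀ j ∈ S, (∑ᶠ i ∈ S, (q i / ∑ᶠ k ∈ S, q k) * Rentry E S ω 1 i j) =
        q j / ∑ᶠ k ∈ S, q k := by
  classical
  set c := Fintype.card V with hc
  have hSfin : S.Finite := S.toFinite
  set Sfin : Finset V := Finset.univ.filter (· ∈ S) with hSfindef
  have hmemSfin : ∀ i, i ∈ Sfin ↔ i ∈ S := by intro i; simp [hSfindef]
  have hsum_rw : ∀ f : V → ℝ, (∑ᶠ k ∈ S, f k) = ∑ k ∈ Sfin, f k := by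
    intro f
    rw [finsum_mem_eq_finite_toFinset_sum f hSfin]
    apply Finset.sum_congr _ (fun _ _ => rfl)
    ext k
    simp only [Set.Finite.mem_toFinset, hSfindef, Finset.mem_filter, Finset.mem_univ, true_and]
  have hoffS_eq : SDR.offS S = Finset.univ.filter (fun i => ¬ i ∈ S) := by
    ext i; simp [SDR.mem_offS]
  set zx : V → ℝ := fun v => ∑ i ∈ Sfin, q i * ω i v with hzx
  set ze : V → ℝ := fun v => ∑ i ∈ SDR.offS S, q i * ω i v with hze
  have hzx' : ∀ v, zx v = ∑ i ∈ Sfin, q i * ω i v := fun _ => rfl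
  have hze' : ∀ v, ze v = ∑ i ∈ SDR.offS S, q i * ω i v := fun _ => rfl
  -- base decomposition of stationarity
  have hbase : ∀ j, q j = zx j + ze j := by
    intro j
    rw [hzx' j, hze' j, ← hqstat j, hoffS_eq]
    exact (Finset.sum_filter_add_sum_filter_not Finset.univ (· ∈ S) _).symm
  -- telescoping
  have hT : ∀ (n : ℕ) (j : V), q j =
      (∑ k ∈ Finset.range (n + 1), SDR.iter ω S zx k j) + SDR.iter ω S ze n j := by
    intro n
    induction n with
    | zero =>
      intro j
      simpa [Finset.range_one, SDR.iter] using hbase j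
    | succ n ih =>
      intro j
      have e1 : SDR.iter ω S ze (n + 1) j
          = ze j - ∑ k ∈ Finset.range (n + 1), SDR.iter ω S zx (k + 1) j := by
        show (∑ i ∈ SDR.offS S, SDR.iter ω S ze n i * ω i j) = _
        have step : ∀ i ∈ SDR.offS S, SDR.iter ω S ze n i * ω i j
            = q i * ω i j - ∑ k ∈ Finset.range (n + 1), SDR.iter ω S zx k i * ω i j := by
          intro i _
          have h := ih i
          have : SDR.iter ω S ze n i
              = q i - ∑ k ∈ Finset.range (n + 1), SDR.iter ω S zx k i := by linarith
          rw [this, sub_mul, Finset.sum_mul]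
        rw [Finset.sum_congr rfl step, Finset.sum_sub_distrib]
        have hswap : (∑ x ∈ SDR.offS S, ∑ k ∈ Finset.range (n + 1),
              SDR.iter ω S zx k x * ω x j)
            = ∑ k ∈ Finset.range (n + 1), SDR.iter ω S zx (k + 1) j := by
          rw [Finset.sum_comm]
          exact Finset.sum_congr rfl fun k _ => rfl
        rw [hswap, hze' j]
      have e2 : (∑ k ∈ Finset.range (n + 2), SDR.iter ω S zx k j)
          = (∑ k ∈ Finset.range (n + 1), SDR.iter ω S zx (k + 1) j)
            + SDR.iter ω S zx 0 j := Finset.sum_range_succ' _ (n + 1)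
      rw [e1, e2]
      have h0 : SDR.iter ω S zx 0 j = zx j := rfl
      rw [h0]
      have := hbase j
      ring_nf
      linarith
  -- vanishing of the error term
  have hZ : ∀ n, c ≤ n → ∀ j, SDR.iter ω S ze n j = 0 := by
    intro n hn j
    rw [SDR.iter_eq]
    apply Finset.sum_eq_zero
    intro l hl
    rw [SDR.mem_Lset] at hl
    obtain ⟨hlen, hlast, hoff⟩ := hl
    by_contra hne0
    have h1 : ze (l.headD j) ≠ 0 := left_ne_zero_of_mul hne0
    have h2 : SDR.wgt ω l ≠ 0 := right_ne_zero_of_mul hne0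
    rw [hze' _] at h1
    obtain ⟨i, hi, hne⟩ := Finset.exists_ne_zero_of_sum_ne_zero h1
    have hωi : ω i (l.headD j) ≠ 0 := right_ne_zero_of_mul hne
    have hiS : i ∉ S := SDR.mem_offS.1 hi
    have hcpos : 1 ≤ c := Fintype.card_pos_iff.2 ⟨j⟩
    match l, hlen with
    | [], hlen => simp at hlen
    | [a], hlen => simp at hlen; omega
    | a :: b :: t, hlen =>
      have hcl : (a :: b :: t).Chain' (fun x y => ω x y ≠ 0) := SDR.chain'_of_wgt_ne ω _ h2
      have hcd : ((a :: b :: t).dropLast).Chain' (fun x y => ω x y ≠ 0) :=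
        hcl.prefix (List.dropLast_prefix _)
      set m : List V := i :: (a :: b :: t).dropLast with hm
      have hchain : m.Chain' (fun x y => ω x y ≠ 0) := by
        rw [hm, List.dropLast_cons₂]
        unfold List.Chain'
        rw [List.isChain_cons_cons]
        refine ⟨by simpa using hωi, by rwa [List.dropLast_cons₂] at hcd⟩
      have hmoff : ∀ v ∈ m, v ∉ S := by
        intro v hv
        rcases List.mem_cons.1 hv with h | h
        · rwa [h]
        · exact hoff v h
      have hnd : m.Nodup := SDR.nodup_of_chain hω hstr hdiag m hchain hmoff
      have hlb := hnd.length_le_card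
      have : m.length = n + 1 := by
        rw [hm]
        simp only [List.length_cons, List.length_dropLast]
        simp only [List.length_cons] at hlen
        omega
      rw [this] at hlb
      omega
  have hqx : ∀ j, q j = ∑ k ∈ Finset.range (c + 1), SDR.iter ω S zx k j := by
    intro j
    have h := hT c j
    rwa [hZ c le_rfl j, add_zero] at h
  -- positivity
  have hpos : 0 < ∑ k ∈ Sfin, q k := by
    rcases (Finset.sum_nonneg fun k _ => hq0 k).lt_or_eq with h | h
    · exact h
    · exfalso
      have hq0' : ∀ k ∈ Sfin, q k = 0 :=
        (Finset.sum_eq_zero_iff_of_nonneg fun k _ => hq0 k).1 h.symm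
      have hzx0 : ∀ v, zx v = 0 := by
        intro v
        rw [hzx' v]
        exact Finset.sum_eq_zero fun i hi => by rw [hq0' i hi, zero_mul]
      have : ∀ j, q j = 0 := by
        intro j
        rw [hqx j]
        exact Finset.sum_eq_zero fun k _ => SDR.iter_eq_zero ω S hzx0 k j
      rw [Finset.sum_congr rfl fun i _ => this i, Finset.sum_const, smul_zero] at hq1
      exact one_ne_zero hq1.symm
  -- the main identity
  have hmain : ∀ j ∈ S, (∑ i ∈ Sfin, q i * Rentry E S ω 1 i j) = q j := by
    intro j hj
    have hBfin : ∀ i : V, {l : List V | IsBranchList E S i j l}.Finite := by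
      intro i
      apply (List.finite_length_le V (c + 1)).subset
      intro l hl
      obtain ⟨hlen2, -, -, -, -, hndl, -⟩ := hl
      have := hndl.length_le_card
      rw [List.length_dropLast] at this
      simp only [Set.mem_setOf_eq]
      omega
    have hRent : ∀ i : V, i ∈ S → Rentry E S ω 1 i j
        = ∑ n ∈ Finset.range (c + 1), ∑ l ∈ SDR.Lset S n j,
            ω i (l.headD j) * SDR.wgt ω l := by
      intro i hiS
      have hb1 : Rentry E S ω 1 i j = ∑ l ∈ (hBfin i).toFinset, branchWeight ω 1 l :=
        finsum_mem_eq_finite_toFinset_sum _ (hBfin i)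
      have hb2 : ∀ l ∈ (hBfin i).toFinset, branchWeight ω 1 l = SDR.wgt ω l := by
        intro l hl
        rw [Set.Finite.mem_toFinset] at hl
        exact SDR.branchWeight_eq_wgt ω l (fun v hv => hdiag v (hl.2.2.2.2.2.2 v hv)) hl.1
      rw [hb1, Finset.sum_congr rfl hb2]
      rw [← Finset.sum_fiberwise_of_maps_to (g := fun l : List V => l.length - 2)
        (t := Finset.range (c + 1)) ?_ (SDR.wgt ω)]
      swap
      · intro l hl
        rw [Set.Finite.mem_toFinset] at hl
        obtain ⟨hlen2, -, -, -, -, hndl, -⟩ := hl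
        have := hndl.length_le_card
        rw [List.length_dropLast] at this
        rw [Finset.mem_range]
        show l.length - 2 < c + 1
        omega
      refine Finset.sum_congr rfl fun n hn => ?_
      -- per-stratum equality
      have hRHS : (∑ l ∈ SDR.Lset S n j, ω i (l.headD j) * SDR.wgt ω l)
          = ∑ m ∈ (SDR.Lset S n j).image (i :: ·), SDR.wgt ω m := by
        rw [Finset.sum_image (fun x _ y _ h => by simpa using h)]
        refine Finset.sum_congr rfl fun l hl => ?_
        rw [SDR.mem_Lset] at hl
        match l, hl.1 with
        | a :: t, _ => simp [SDR.wgt_cons_cons]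
      rw [hRHS]
      refine Finset.sum_subset ?_ ?_
      · -- branches of length n+2 are of the form i :: l with l ∈ Lset S n j
        intro l hl
        rw [Finset.mem_filter, Set.Finite.mem_toFinset] at hl
        obtain ⟨⟨hlen2, hchE, hhead, hlast, hndt, hndd, hint⟩, hlenn⟩ := hl
        match l, hlen2 with
        | a :: b :: t, _ =>
          have ha : a = i := by simpa using hhead
          rw [Finset.mem_image]
          refine ⟨b :: t, ?_, by rw [ha]⟩
          rw [SDR.mem_Lset]
          refine ⟨?_, ?_, ?_⟩
          · simp only [List.length_cons] at hlenn ⊢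
            omega
          · rw [List.getLast?_cons_cons] at hlast
            exact hlast
          · intro v hv
            exact hint v (by simpa using hv)
      · -- non-branch walks have zero weight
        intro m hm hmA
        rw [Finset.mem_image] at hm
        obtain ⟨l, hl, rfl⟩ := hm
        rw [SDR.mem_Lset] at hl
        obtain ⟨hlen, hlast, hoff⟩ := hl
        by_contra hne
        apply hmA
        rw [Finset.mem_filter, Set.Finite.mem_toFinset]
        match l, hlen with
        | a :: t, hlen =>
          have hcm : (i :: a :: t).Chain' (fun x y => ω x y ≠ 0) :=
            SDR.chain'_of_wgt_ne ω _ hne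
          have hcl : (a :: t).Chain' (fun x y => ω x y ≠ 0) := hcm.tail
          have hcd : ((a :: t).dropLast).Chain' (fun x y => ω x y ≠ 0) :=
            hcl.prefix (List.dropLast_prefix _)
          have hnd : ((a :: t).dropLast).Nodup :=
            SDR.nodup_of_chain hω hstr hdiag _ hcd hoff
          have hEchain : (i :: a :: t).Chain' E :=
            hcm.imp fun x y hxy => by
              by_contra hE
              exact hxy (hω x y hE)
          have hsplit : ((a :: t).dropLast) ++ [j] = a :: t :=
            List.dropLast_append_getLast? j hlast
          have hjdrop : j ∉ (a :: t).dropLast := fun h => hoff j h hj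
          have hidrop : i ∉ (a :: t).dropLast := fun h => hoff i h hiS
          have htnd : (a :: t).Nodup := by
            rw [← hsplit]
            refine hnd.append (List.nodup_singleton j) ?_
            intro v hv hv'
            rw [List.mem_singleton] at hv'
            subst hv'
            exact hjdrop hv
          refine ⟨⟨by simp, hEchain, rfl, ?_, ?_, ?_, ?_⟩, ?_⟩
          · rw [List.getLast?_cons_cons]
            exact hlast
          · exact htnd
          · rw [List.dropLast_cons₂, List.nodup_cons]
            exact ⟨hidrop, hnd⟩
          · intro v hv
            exact hoff v hv
          · simp only [List.length_cons] at hlen ⊢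
            omega
    -- assemble the main identity
    calc (∑ i ∈ Sfin, q i * Rentry E S ω 1 i j)
        = ∑ i ∈ Sfin, ∑ n ∈ Finset.range (c + 1), ∑ l ∈ SDR.Lset S n j,
            q i * (ω i (l.headD j) * SDR.wgt ω l) := by
          refine Finset.sum_congr rfl fun i hi => ?_
          rw [hRent i ((hmemSfin i).1 hi), Finset.mul_sum]
          exact Finset.sum_congr rfl fun n _ => Finset.mul_sum ..
      _ = ∑ n ∈ Finset.range (c + 1), ∑ l ∈ SDR.Lset S n j,
            ∑ i ∈ Sfin, q i * (ω i (l.headD j) * SDR.wgt ω l) := by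
          rw [Finset.sum_comm]
          exact Finset.sum_congr rfl fun n _ => Finset.sum_comm
      _ = ∑ n ∈ Finset.range (c + 1), SDR.iter ω S zx n j := by
          refine Finset.sum_congr rfl fun n _ => ?_
          rw [SDR.iter_eq]
          refine Finset.sum_congr rfl fun l hl => ?_
          rw [hzx' (l.headD j), Finset.sum_mul]
          exact Finset.sum_congr rfl fun i _ => by ring
      _ = q j := (hqx j).symm
  -- conclusion
  constructor
  · rw [hsum_rw]
    exact hpos
  · intro j hj
    rw [hsum_rw q, hsum_rw]
    calc (∑ i ∈ Sfin, (q i / ∑ k ∈ Sfin, q k) * Rentry E S ω 1 i j)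
        = ∑ i ∈ Sfin, (q i * Rentry E S ω 1 i j) / (∑ k ∈ Sfin, q k) := by
          exact Finset.sum_congr rfl fun i _ => by ring
      _ = (∑ i ∈ Sfin, q i * Rentry E S ω 1 i j) / (∑ k ∈ Sfin, q k) := by
          rw [Finset.sum_div]
      _ = q j / (∑ k ∈ Sfin, q k) := by rw [hmain j hj]
end

section
/- Let G = (V,E,ω) be a finite weighted directed graph with weighted adjacency matrix M_G, and let S ⊂ V be a 1-structural set of G with ω(ℓ,ℓ) = 0 for all ℓ ∈ V∖S. Write S̄ = V∖S and decompose M_G into the blocks M_{SS}, M_{SS̄}, M_{S̄S}, M_{S̄S̄} indexed by S and S̄. Then for all i,j ∈ S: R^{(1)}_{ij}(G,S,1) = ω(i,j), and for every n ≥ 2, R^{(n)}_{ij}(G,S,1) = (M_{SS̄} · (M_{S̄S̄})^{n−2} · M_{S̄S})_{ij}, where R^{(n)}_{ij}(G,S,1) = Σ_{β∈B^{(n)}_{ij}} ω(β,1) is the sum of weights of branches of length n from i to j. -/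
open scoped Classical

section Aux
variable {V : Type*}

noncomputable def pw (ω : V → V → ℂ) : List V → ℂ
  | [] => 1
  | [_] => 1
  | a :: b :: t => ω a b * pw ω (b :: t)

lemma pw_cons (ω : V → V → ℂ) (x b : V) (t : List V) :
    pw ω (x :: b :: t) = ω x b * pw ω (b :: t) := rfl

def US (E : V → V → Prop) (S : Set V) (x j : V) (m : ℕ) : Set (List V) :=
  {l | l.Chain' E ∧ l.head? = some x ∧ l.getLast? = some j ∧
    (∀ v ∈ l.tail.dropLast, v ∉ S) ∧ l.tail.dropLast.Nodup ∧ x ∉ l.tail.dropLast ∧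
    l.length = m}

lemma branchWeight_eq_pw (ω : V → V → ℂ) :
    ∀ l : List V, 2 ≤ l.length → (∀ v ∈ l.tail.dropLast, ω v v = 0) →
      branchWeight ω 1 l = pw ω l
  | [_, _], _, _ => by simp [branchWeight, pw]
  | i :: b :: c :: t, _, h => by
      have hb : ω b b = 0 := h b (by simp)
      have ih := branchWeight_eq_pw ω (b :: c :: t) (by simp)
        (fun v hv => h v (List.mem_cons_of_mem _ hv))
      rw [branchWeight, ih, hb, pw_cons, pw_cons, pw_cons]
      ring

lemma branchSet_eq_US (E : V → V → Prop) (S : Set V) {i j : V}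
    (hi : i ∈ S) (hj : j ∈ S) (n : ℕ) (hn : 1 ≤ n) :
    {l : List V | IsBranchList E S i j l ∧ l.length = n + 1} = US E S i j (n + 1) := by
  ext l
  simp only [Set.mem_setOf_eq, IsBranchList, US]
  constructor
  · rintro ⟨⟨-, hc, hh, hg, htnd, hdnd, hmid⟩, hlen⟩
    exact ⟨hc, hh, hg, hmid, htnd.sublist (List.dropLast_sublist _), 
      fun hmem => (hmid i hmem) hi, hlen⟩
  · rintro ⟨hc, hh, hg, hmid, hnd, hx, hlen⟩
    -- l = i :: t with t ≠ []
    obtain ⟨t, rfl⟩ : ∃ t, l = i :: t := by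
      cases l with
      | nil => simp at hh
      | cons a t => exact ⟨t, by simpa using hh⟩
    simp only [List.tail_cons] at hnd hx hmid
    have ht : t ≠ [] := by
      intro h; subst h; simp at hlen; omega
    have hgt : t.getLast? = some j := by
      cases t with
      | nil => exact absurd rfl ht
      | cons c t' => simpa using hg
    have htail : t.dropLast ++ [j] = t :=
      List.dropLast_append_getLast? j hgt
    refine ⟨⟨by cases t with
      | nil => exact absurd rfl ht
      | cons c t' => simp, hc, hh, hg, ?_, ?_, by simpa using hmid⟩, hlen⟩
    · -- t.Nodup
      show t.Nodup
      rw [← htail, List.nodup_append]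
      refine ⟨by simpa using hnd, by simp, ?_⟩
      intro v hv
      simp only [List.mem_singleton]
      intro _ hb hvb
      exact (hmid v (by simpa using hv)) (by rw [hvb, hb]; exact hj)
    · -- (i :: t).dropLast.Nodup
      rw [List.dropLast_cons_of_ne_nil ht, List.nodup_cons]
      exact ⟨by simpa using hx, by simpa using hnd⟩

lemma US_no_return (E : V → V → Prop) (S : Set V)
    (hcyc : ∀ l, IsCycleList E l → 2 < l.length → ∃ v ∈ l, v ∈ S)
    {x b j : V} (hx : x ∉ S) (hb : b ∉ S) (hxb : x ≠ b) (hE : E x b)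
    {m : ℕ} (hm : 2 ≤ m) {l : List V} (hl : l ∈ US E S b j m) :
    x ∉ l.dropLast := by
  intro hmem
  obtain ⟨hc, hh, hg, hS, hnd, hbl, hlen⟩ := hl
  obtain ⟨t, rfl⟩ : ∃ t, l = b :: t := by
    cases l with
    | nil => simp at hh
    | cons a t => exact ⟨t, by simpa using hh⟩
  have ht : t ≠ [] := by intro h; subst h; simp at hlen; omega
  rw [List.dropLast_cons_of_ne_nil ht] at hmem
  simp only [List.tail_cons] at hS hnd hbl
  have hxD : x ∈ t.dropLast := by
    rcases List.mem_cons.mp hmem with h | h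
    · exact absurd h hxb
    · exact h
  obtain ⟨u, w, huw⟩ := List.append_of_mem hxD
  rw [huw] at hS hnd hbl
  have hLdec : (b :: t).dropLast ++ [j] = b :: t :=
    List.dropLast_append_getLast? j hg
  -- cycle  x :: b :: u ++ [x]
  have hchain : List.Chain' E ((b :: u) ++ [x]) := by
    refine hc.prefix ⟨w ++ [j], ?_⟩
    rw [← hLdec, List.dropLast_cons_of_ne_nil ht, huw]
    simp
  have hcycle : IsCycleList E (x :: ((b :: u) ++ [x])) := by
    refine ⟨by simp, ?_, ?_, ?_⟩
    · refine List.isChain_cons.mpr ?_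
      constructor
      · intro y hy
        simp only [List.cons_append, List.head?_cons] at hy
        obtain rfl : b = y := by injection hy
        exact hE
      · exact hchain
    · have hrw : x :: ((b :: u) ++ [x]) = (x :: b :: u) ++ [x] := by simp
      rw [hrw, List.getLast?_concat]
      simp
    · have hrw : x :: ((b :: u) ++ [x]) = (x :: b :: u) ++ [x] := by simp
      rw [hrw, List.dropLast_concat]
      have hxu : x ∉ u := by
        have := (List.nodup_append'.mp hnd).2.2
        intro hxu'
        exact this hxu' (by simp)
      have hunodup : u.Nodup := (List.nodup_append.mp hnd).1
      have hbu : b ∉ u := fun h => hbl (by simp [h])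
      have hxb' : x ≠ b := hxb
      simp [List.nodup_cons, hxu, hxb', hbu, hunodup]
  obtain ⟨v, hv, hvS⟩ := hcyc _ hcycle (by simp)
  have hvcases : v = x ∨ v = b ∨ v ∈ u := by
    simp at hv; tauto
  rcases hvcases with rfl | rfl | hv'
  · exact hx hvS
  · exact hb hvS
  · exact hS v (by simp [hv']) hvS


variable [Finite V]

lemma US_finite (E : V → V → Prop) (S : Set V) (x j : V) (m : ℕ) :
    (US E S x j m).Finite :=
  (List.finite_length_eq V m).subset fun _ hl => hl.2.2.2.2.2.2

noncomputable def USsum (E : V → V → Prop) (S : Set V) (ω : V → V → ℂ) (x j : V)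
    (m : ℕ) : ℂ :=
  ∑ l ∈ (US_finite E S x j m).toFinset, pw ω l

/-- decomposition of a member of `US x j (k+3)` -/
lemma US_decomp {E : V → V → Prop} {S : Set V} {x j : V} {k : ℕ} {l : List V}
    (hl : l ∈ US E S x j (k + 3)) :
    ∃ b t, l = x :: b :: t ∧ t ≠ [] ∧ E x b ∧ b ∉ S ∧ x ∉ (b :: t).dropLast ∧
      (b :: t) ∈ US E S b j (k + 2) := by
  obtain ⟨hc, hh, hg, hS, hnd, hx, hlen⟩ := hl
  obtain ⟨a, t0, rfl⟩ : ∃ a t0, l = a :: t0 := by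
    cases l with
    | nil => simp at hh
    | cons a t0 => exact ⟨a, t0, rfl⟩
  obtain rfl : x = a := by simpa using hh.symm
  obtain ⟨b, t, rfl⟩ : ∃ b t, t0 = b :: t := by
    cases t0 with
    | nil => simp at hlen
    | cons b t => exact ⟨b, t, rfl⟩
  have ht : t ≠ [] := by intro h; subst h; simp at hlen
  simp only [List.tail_cons] at hS hnd hx
  rw [List.dropLast_cons_of_ne_nil ht] at hS hnd hx
  have hbmem : b ∈ (b :: t).dropLast := by
    rw [List.dropLast_cons_of_ne_nil ht]; simp
  have hgt : (b :: t).getLast? = some j := by simpa using hg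
  have hEb : E x b := (List.isChain_cons_cons.mp hc).1
  refine ⟨b, t, rfl, ht, hEb, hS b (by simp), ?_, ?_⟩
  · rw [List.dropLast_cons_of_ne_nil ht]
    simpa using hx
  · refine ⟨(List.isChain_cons_cons.mp hc).2, rfl, hgt, ?_, ?_, ?_, by simpa using hlen⟩
    · intro v hv
      exact hS v (List.mem_cons_of_mem _ hv)
    · exact (List.nodup_cons.mp hnd).2
    · exact (List.nodup_cons.mp hnd).1

lemma US_cons {E : V → V → Prop} {S : Set V} {x b j : V} {k : ℕ} {l : List V}
    (hE : E x b) (hxl : x ∉ l.dropLast) (hl : l ∈ US E S b j (k + 2)) (hb : b ∉ S) :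
    x :: l ∈ US E S x j (k + 3) := by
  obtain ⟨hc, hh, hg, hS, hnd, hbl, hlen⟩ := hl
  obtain ⟨t, rfl⟩ : ∃ t, l = b :: t := by
    cases l with
    | nil => simp at hh
    | cons a t => exact ⟨t, by simpa using hh⟩
  have ht : t ≠ [] := by intro h; subst h; simp at hlen
  simp only [List.tail_cons] at hS hnd hbl
  rw [List.dropLast_cons_of_ne_nil ht] at hxl
  refine ⟨List.isChain_cons_cons.mpr ⟨hE, hc⟩, rfl, by simpa using hg, ?_, ?_, ?_, by simp [hlen]⟩
  · simp only [List.tail_cons]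
    rw [List.dropLast_cons_of_ne_nil ht]
    intro v hv
    rcases List.mem_cons.mp hv with rfl | hv
    · exact hb
    · exact hS v hv
  · simp only [List.tail_cons]
    rw [List.dropLast_cons_of_ne_nil ht]
    exact List.nodup_cons.mpr ⟨hbl, hnd⟩
  · simp only [List.tail_cons]
    rw [List.dropLast_cons_of_ne_nil ht]
    exact hxl

lemma USsum_peel (E : V → V → Prop) (S : Set V) (ω : V → V → ℂ)
    [Fintype V] [DecidableEq V] [Inhabited V]
    (hω : ∀ i j, ¬ E i j → ω i j = 0)
    (hcyc : ∀ l, IsCycleList E l → 2 < l.length → ∃ v ∈ l, v ∈ S)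
    (hdiag : ∀ ℓ, ℓ ∉ S → ω ℓ ℓ = 0)
    (x j : V) (k : ℕ) :
    USsum E S ω x j (k + 3)
      = ∑ b : V, (if b ∈ S then 0 else ω x b * USsum E S ω b j (k + 2)) := by
  rw [show USsum E S ω x j (k+3) = ∑ l ∈ (US_finite E S x j (k+3)).toFinset, pw ω l from rfl]
  have hfib := Finset.sum_fiberwise_of_maps_to (s := (US_finite E S x j (k+3)).toFinset)
      (t := (Finset.univ : Finset V)) (g := fun l : List V => l.tail.headI)
      (fun l _ => Finset.mem_univ _) (fun l => pw ω l)
  rw [← hfib]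
  refine Finset.sum_congr rfl fun b _ => ?_
  have hmem_decomp : ∀ l ∈ (US_finite E S x j (k+3)).toFinset.filter
      (fun l => l.tail.headI = b),
      ∃ t, l = x :: b :: t ∧ t ≠ [] ∧ E x b ∧ b ∉ S ∧ x ∉ (b :: t).dropLast ∧
        (b :: t) ∈ US E S b j (k + 2) := by
    intro l hl
    rw [Finset.mem_filter, Set.Finite.mem_toFinset] at hl
    obtain ⟨hl, hfib⟩ := hl
    obtain ⟨b', t, rfl, ht, hE, hbS, hxd, hUS⟩ := US_decomp hl
    obtain rfl : b' = b := by simpa using hfib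
    exact ⟨t, rfl, ht, hE, hbS, hxd, hUS⟩
  by_cases hbS : b ∈ S
  · rw [if_pos hbS]
    apply Finset.sum_eq_zero
    intro l hl
    obtain ⟨t, rfl, ht, hE, hbS', hxd, hUS⟩ := hmem_decomp l hl
    exact absurd hbS hbS'
  · rw [if_neg hbS]
    by_cases hE : E x b
    · -- bijection case, but first handle x = b with x ∉ S
      by_cases hxb : x = b
      · subst hxb
        -- filter set is empty : x ∈ dropLast of tail contradicts hxd
        rw [Finset.sum_eq_zero, hdiag x hbS, zero_mul]
        intro l hl
        obtain ⟨t, rfl, ht, -, -, hxd, -⟩ := hmem_decomp l hl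
        exact absurd (by rw [List.dropLast_cons_of_ne_nil ht]; simp) hxd
      · -- genuine bijection
        have Hnr : ∀ l' ∈ US E S b j (k+2), x ∉ l'.dropLast := by
          intro l' hl'
          by_cases hxS : x ∈ S
          · obtain ⟨-, hh', -, hS', -, -, hlen'⟩ := hl'
            obtain ⟨t', rfl⟩ : ∃ t', l' = b :: t' := by
              cases l' with
              | nil => simp at hh'
              | cons a t' => exact ⟨t', by simpa using hh'⟩
            have ht' : t' ≠ [] := by intro h; subst h; simp at hlen'
            rw [List.dropLast_cons_of_ne_nil ht']
            intro hmem
            rcases List.mem_cons.mp hmem with rfl | hmem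
            · exact hbS hxS
            · exact hS' x (by simpa using hmem) hxS
          · exact US_no_return E S hcyc hxS hbS hxb hE (by omega) hl'
        rw [show USsum E S ω b j (k+2)
            = ∑ l ∈ (US_finite E S b j (k+2)).toFinset, pw ω l from rfl,
          Finset.mul_sum]
        refine Finset.sum_bij' (fun l _ => l.tail) (fun l' _ => x :: l') ?_ ?_ ?_ ?_ ?_
        · intro l hl
          obtain ⟨t, rfl, -, -, -, -, hUS⟩ := hmem_decomp l hl
          simpa [Set.Finite.mem_toFinset] using hUS
        · intro l' hl'
          rw [Set.Finite.mem_toFinset] at hl'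
          have := US_cons hE (Hnr l' hl') hl' hbS
          rw [Finset.mem_filter, Set.Finite.mem_toFinset]
          refine ⟨this, ?_⟩
          obtain ⟨t', rfl⟩ : ∃ t', l' = b :: t' := by
            obtain ⟨-, hh', -⟩ := hl'
            cases l' with
            | nil => simp at hh'
            | cons a t' => exact ⟨t', by simpa using hh'⟩
          simp
        · intro l hl
          obtain ⟨t, rfl, -⟩ := hmem_decomp l hl
          simp
        · intro l' _
          simp
        · intro l hl
          obtain ⟨t, rfl, -⟩ := hmem_decomp l hl
          simp [pw_cons]
    · -- ω x b = 0 and filter set empty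
      rw [Finset.sum_eq_zero, hω _ _ hE, zero_mul]
      intro l hl
      obtain ⟨t, rfl, -, hE', -⟩ := hmem_decomp l hl
      exact absurd hE' hE

lemma US_two (E : V → V → Prop) (S : Set V) (x j : V) :
    US E S x j 2 = if E x j then {[x, j]} else ∅ := by
  ext l
  constructor
  · rintro ⟨hc, hh, hg, -, -, -, hlen⟩
    obtain ⟨p, q, rfl⟩ := List.length_eq_two.mp hlen
    obtain rfl : p = x := by simpa using hh
    obtain rfl : q = j := by simpa using hg
    have hE : E p q := (List.isChain_cons_cons.mp hc).1
    simp [hE]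
  · intro hl
    by_cases hE : E x j
    · simp only [if_pos hE, Set.mem_singleton_iff] at hl
      subst hl
      exact ⟨List.isChain_pair.mpr hE, rfl, rfl, by simp, by simp, by simp, rfl⟩
    · simp [hE] at hl

lemma USsum_two (E : V → V → Prop) (S : Set V) (ω : V → V → ℂ)
    (hω : ∀ i j, ¬ E i j → ω i j = 0) (x j : V) :
    USsum E S ω x j 2 = ω x j := by
  unfold USsum
  by_cases hE : E x j
  · have h : (US_finite E S x j 2).toFinset = {[x, j]} := by
      ext l; simp [US_two, hE]
    rw [h]
    simp [pw]
  · have h : (US_finite E S x j 2).toFinset = ∅ := by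
      ext l; simp [US_two, hE]
    rw [h, Finset.sum_empty, hω _ _ hE]

lemma subconv [Fintype V] (S : Set V) [DecidablePred (· ∈ S)] (f : V → ℂ) :
    (∑ c : V, @ite ℂ (c ∈ S) (Classical.propDecidable _) 0 (f c))
      = ∑ c : ↥(Sᶜ : Set V), f c := by
  have hite : ∀ c : V, (@ite ℂ (c ∈ S) (Classical.propDecidable _) 0 (f c))
      = if c ∈ S then 0 else f c := by
    intro c; by_cases hc : c ∈ S <;> simp [hc]
  simp only [hite]
  rw [← Finset.sum_subtype (Finset.univ.filter (fun c => c ∈ (Sᶜ : Set V)))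
      (fun c => by simp [Set.mem_compl_iff]) f, Finset.sum_filter]
  apply Finset.sum_congr rfl
  intro c _
  by_cases hc : c ∈ S <;> simp [hc]

end Aux

/-- For a `1`-structural set `S` with zero diagonal weights off `S`,
`R^{(1)}_{ij}(G,S,1) = ω(i,j)` and for `n ≥ 2`,
`R^{(n)}_{ij}(G,S,1) = (M_{S S̄} (M_{S̄ S̄})^{n-2} M_{S̄ S})_{ij}` for all `i, j ∈ S`. -/
theorem branch_sums_as_block_products
    {V : Type*} [Fintype V] [DecidableEq V]
    (E : V → V → Prop) (ω : V → V → ℂ)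
    (hω : ∀ i j, ¬ E i j → ω i j = 0)
    (S : Set V) [DecidablePred (· ∈ S)]
    (hstr : IsStructural E ω 1 S)
    (hdiag : ∀ ℓ, ℓ ∉ S → ω ℓ ℓ = 0) :
    (∀ i j : ↥S, RentryN E S ω 1 1 (i : V) (j : V) = ω i j) ∧
      ∀ n : ℕ, 2 ≤ n → ∀ i j : ↥S,
        RentryN E S ω 1 n (i : V) (j : V) =
          ((Matrix.of fun (a : ↥S) (b : ↥(Sᶜ : Set V)) => ω a b) *
              (Matrix.of fun (a b : ↥(Sᶜ : Set V)) => ω a b) ^ (n - 2) *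
              (Matrix.of fun (a : ↥(Sᶜ : Set V)) (b : ↥S) => ω a b)) i j := by
  classical
  obtain ⟨⟨v0, hv0⟩, hcyc, hlam⟩ := hstr
  haveI : Inhabited V := ⟨v0⟩
  have hR : ∀ (i j : V), i ∈ S → j ∈ S → ∀ n : ℕ, 1 ≤ n →
      RentryN E S ω 1 n i j = USsum E S ω i j (n + 1) := by
    intro i j hi hj n hn
    rw [RentryN, branchSet_eq_US E S hi hj n hn,
      finsum_mem_eq_finite_toFinset_sum _ (US_finite E S i j (n + 1))]
    apply Finset.sum_congr rfl
    intro l hl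
    rw [Set.Finite.mem_toFinset] at hl
    obtain ⟨hc, hh, hg, hS, -, -, hlen⟩ := hl
    exact branchWeight_eq_pw ω l (by rw [hlen]; omega) (fun v hv => hdiag v (hS v hv))
  set N : Matrix ↥(Sᶜ : Set V) ↥(Sᶜ : Set V) ℂ :=
    Matrix.of fun (a b : ↥(Sᶜ : Set V)) => ω a b with hN
  set M₂ : Matrix ↥(Sᶜ : Set V) ↥S ℂ :=
    Matrix.of fun (a : ↥(Sᶜ : Set V)) (b : ↥S) => ω a b with hM2
  have key : ∀ (k : ℕ) (j : ↥S) (b : ↥(Sᶜ : Set V)),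
      USsum E S ω b (j : V) (k + 2) = ((N ^ k) * M₂) b j := by
    intro k
    induction k with
    | zero =>
      intro j b
      rw [USsum_two E S ω hω, pow_zero, Matrix.one_mul]
      simp [hM2]
    | succ k ih =>
      intro j b
      rw [show k + 1 + 2 = k + 3 from rfl, USsum_peel E S ω hω hcyc hdiag,
        subconv S (fun c => ω b c * USsum E S ω c (j : V) (k + 2))]
      rw [pow_succ', Matrix.mul_assoc, Matrix.mul_apply]
      apply Finset.sum_congr rfl
      intro c _
      rw [ih j c]
      simp [hN]
  constructor
  · intro i j
    rw [hR i j i.2 j.2 1 le_rfl, USsum_two E S ω hω]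
  · intro n hn i j
    obtain ⟨k, rfl⟩ : ∃ k, n = k + 2 := ⟨n - 2, by omega⟩
    rw [hR i j i.2 j.2 (k + 2) (by omega), show k + 2 + 1 = k + 3 from rfl,
      USsum_peel E S ω hω hcyc hdiag,
      subconv S (fun c => ω i c * USsum E S ω c (j : V) (k + 2)),
      show k + 2 - 2 = k from by omega, Matrix.mul_assoc, Matrix.mul_apply]
    apply Finset.sum_congr rfl
    intro c _
    rw [key k j c]
    simp [hN, hM2]
end

section
/- Let G = (V,E,ω) be a finite weighted directed graph with weighted adjacency matrix M_G, and let S ⊂ V be a 1-structural set of G with ω(ℓ,ℓ) = 0 for all ℓ ∈ V∖S. Write S̄ = V∖S and decompose M_G into the blocks M_{SS}, M_{SS̄}, M_{S̄S}, M_{S̄S̄}. Then the matrix I − M_{S̄S̄} is invertible, and the reduced matrix satisfies R_S(G,1) = M_{SS} + M_{SS̄} (I − M_{S̄S̄})^{−1} M_{S̄S}. -/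
open Function Set
namespace IGRAux

lemma list_not_nodup_split {α : Type*} : ∀ (L : List α), ¬ L.Nodup →
    ∃ (a : α) (l₁ l₂ l₃ : List α), L = l₁ ++ a :: (l₂ ++ a :: l₃)
  | [], h => absurd List.nodup_nil h
  | x :: t, h => by
    by_cases hx : x ∈ t
    · obtain ⟨l₂, l₃, rfl⟩ := List.append_of_mem hx
      exact ⟨x, [], l₂, l₃, rfl⟩
    · have ht : ¬ t.Nodup := fun hn => h (List.nodup_cons.2 ⟨hx, hn⟩)
      obtain ⟨a, l₁, l₂, l₃, rfl⟩ := list_not_nodup_split t ht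
      exact ⟨a, x :: l₁, l₂, l₃, rfl⟩

lemma chain'_all_mem {α : Type*} {r : α → α → Prop} {p : α → Prop}
    (hr : ∀ a b, r a b → p a ∧ p b) :
    ∀ l : List α, l.Chain' r → 2 ≤ l.length → ∀ v ∈ l, p v := by
  intro l
  induction l with
  | nil => simp
  | cons a t ih =>
    intro hc hl v hv
    cases t with
    | nil => simp at hl
    | cons b t' =>
      simp only [List.Chain'] at hc
      rw [List.isChain_cons_cons] at hc
      rw [List.mem_cons] at hv
      rcases hv with rfl | hv
      · exact (hr _ _ hc.1).1
      · cases t' with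
        | nil => simp at hv; subst hv; exact (hr _ _ hc.1).2
        | cons c t'' => exact ih hc.2 (by simp) v hv

lemma head?_getLast?_eq {α : Type*} : ∀ (l : List α) (a c : α), l.head? = some a →
    l.getLast? = some c → 2 ≤ l.length → l = a :: (l.tail.dropLast ++ [c])
  | x :: t, a, c, ha, hc, hl => by
    obtain rfl : x = a := by simpa using ha
    have ht : t ≠ [] := by cases t <;> simp_all
    rw [List.getLast?_cons, List.getLast?_eq_getLast ht] at hc
    simp only [Option.getD_some, Option.some.injEq] at hc
    have h2 := List.dropLast_append_getLast ht
    rw [hc] at h2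
    simpa using h2.symm

lemma no_closed {V : Type*} {r E : V → V → Prop} {S : Set V}
    (hrE : ∀ a b, r a b → E a b) (hrS : ∀ a b, r a b → a ∉ S ∧ b ∉ S)
    (hloop : ∀ a, ¬ r a a)
    (hcyc : ∀ l, IsCycleList E l → 2 < l.length → ∃ v ∈ l, v ∈ S) :
    ∀ l : List V, 2 ≤ l.length → l.Chain' r → l.head? = l.getLast? → False := by
  suffices H : ∀ n (l : List V), l.length ≤ n → 2 ≤ l.length → l.Chain' r →
      l.head? = l.getLast? → False by
    intro l h2 hc hh
    exact H l.length l le_rfl h2 hc hh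
  intro n
  induction n with
  | zero => intro l hn h2; omega
  | succ n ih =>
    intro l hn h2 hc hh
    by_cases hnd : l.dropLast.Nodup
    · rcases eq_or_lt_of_le h2 with h2' | h2'
      · -- length = 2
        obtain ⟨a, b, rfl⟩ := List.length_eq_two.1 h2'.symm
        have : a = b := by simpa using hh
        subst this
        have := List.isChain_cons_cons.1 hc
        exact hloop a this.1
      · obtain ⟨v, hvl, hvS⟩ := hcyc l ⟨h2, hc.imp hrE, hh, hnd⟩ h2'
        exact chain'_all_mem hrS l hc h2 v hvl hvS
    · obtain ⟨a, l₁, l₂, l₃, hsplit⟩ := list_not_nodup_split _ hnd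
      set M : List V := a :: (l₂ ++ [a]) with hM
      have hinfix : M <:+: l := by
        refine List.IsInfix.trans ⟨l₁, l₃, ?_⟩ l.dropLast_prefix.isInfix
        rw [hsplit]; simp [hM]
      have hlen : M.length ≤ n := by
        have h1 := hinfix.sublist.length_le
        have h2 := List.length_dropLast (xs := l)
        have h3 : l₁.length + (l₂.length + (l₃.length + 2)) = l.dropLast.length := by
          rw [hsplit]; simp; omega
        have : M.length = l₂.length + 2 := by simp [hM]
        omega
      refine ih M hlen (by simp [hM]) (hc.infix hinfix) ?_
      have : M = (a :: l₂) ++ [a] := by simp [hM]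
      rw [this, List.getLast?_append_of_ne_nil _ (by simp)]
      simp

lemma chain'_nodup {V : Type*} {r : V → V → Prop}
    (hnc : ∀ l : List V, 2 ≤ l.length → l.Chain' r → l.head? = l.getLast? → False) :
    ∀ l : List V, l.Chain' r → l.Nodup := by
  intro l hc
  by_contra h
  obtain ⟨a, l₁, l₂, l₃, hsplit⟩ := list_not_nodup_split _ h
  set M : List V := a :: (l₂ ++ [a]) with hM
  have hinfix : M <:+: l := ⟨l₁, l₃, by rw [hsplit]; simp [hM]⟩
  refine hnc M (by simp [hM]) (hc.infix hinfix) ?_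
  have : M = (a :: l₂) ++ [a] := by simp [hM]
  rw [this, List.getLast?_append_of_ne_nil _ (by simp)]
  simp

variable {V : Type*}

/-- product of edge weights along `a :: t ++ [c]` -/
def pw (ω : V → V → ℂ) : V → V → List V → ℂ
  | a, c, [] => ω a c
  | a, c, b :: t => ω a b * pw ω b c t

variable {ω : V → V → ℂ} {S : Set V}

lemma bw_eq_pw (hdiag : ∀ v, v ∉ S → ω v v = 0) :
    ∀ (t : List V) (a c : V), (∀ v ∈ t, v ∉ S) →
      branchWeight ω 1 (a :: (t ++ [c])) = pw ω a c t
  | [], a, c, _ => by simp [branchWeight, pw]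
  | [b], a, c, hm => by
    have hb : ω b b = 0 := hdiag b (hm b (by simp))
    simp [branchWeight, pw, hb]
  | b :: d :: t, a, c, hm => by
    have hb : ω b b = 0 := hdiag b (hm b (by simp))
    have ih := bw_eq_pw hdiag (d :: t) b c (fun v hv => hm v (by simp [hv]))
    show ω a b * branchWeight ω 1 (b :: (d :: t ++ [c])) / (1 - ω b b) = _
    rw [ih, hb]
    simp [pw]

lemma pw_chain' : ∀ (t : List V) (a c : V), (∀ v ∈ t, v ∉ S) → a ∉ S →
    pw ω a c t ≠ 0 → (a :: t).Chain' (fun x y => x ∉ S ∧ y ∉ S ∧ ω x y ≠ 0)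
  | [], a, c, _, _, _ => by simp [List.Chain']
  | b :: t, a, c, hm, ha, hne => by
    have hb : b ∉ S := hm b (by simp)
    have h1 : ω a b ≠ 0 := fun h => hne (by simp [pw, h])
    have h2 : pw ω b c t ≠ 0 := fun h => hne (by simp [pw, h])
    simp only [List.Chain']
    rw [List.isChain_cons_cons]
    exact ⟨⟨ha, hb, h1⟩, pw_chain' t b c (fun v hv => hm v (by simp [hv])) hb h2⟩

lemma pw_chain'E {E : V → V → Prop} (hω : ∀ i j, ¬ E i j → ω i j = 0) :
    ∀ (t : List V) (a c : V), pw ω a c t ≠ 0 → (a :: (t ++ [c])).Chain' E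
  | [], a, c, hne => by
    simp only [List.nil_append]
    simp only [List.Chain']
    rw [List.isChain_cons_cons]
    refine ⟨?_, by simp⟩
    by_contra h
    exact hne (by simp [pw, hω _ _ h])
  | b :: t, a, c, hne => by
    have h1 : ω a b ≠ 0 := fun h => hne (by simp [pw, h])
    have h2 : pw ω b c t ≠ 0 := fun h => hne (by simp [pw, h])
    simp only [List.Chain']
    rw [List.cons_append, List.isChain_cons_cons]
    refine ⟨?_, pw_chain'E hω t b c h2⟩
    by_contra h
    exact h1 (hω _ _ h)

lemma bw_cons (hdiag : ∀ v, v ∉ S → ω v v = 0) :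
    ∀ (l : List V) (a c : V), l.head? = some c → 2 ≤ l.length → c ∉ S →
      branchWeight ω 1 (a :: l) = ω a c * branchWeight ω 1 l
  | [], a, c, hh, hl, hc => by simp at hl
  | [x], a, c, hh, hl, hc => by simp at hl
  | c' :: d :: t, a, c, hh, _, hc => by
    obtain rfl : c = c' := by simpa using hh.symm
    show ω a c * branchWeight ω 1 (c :: d :: t) / (1 - ω c c) = _
    rw [hdiag c hc]
    simp

lemma finsum_mem_iUnion' {ι α : Type*} [Fintype ι] (f : α → ℂ) (t : ι → Set α)
    (h : Pairwise (Disjoint on t)) (ht : ∀ b, (t b ∩ support f).Finite) :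
    ∑ᶠ a ∈ ⋃ b, t b, f a = ∑ b, ∑ᶠ a ∈ t b, f a := by
  rw [← finsum_mem_inter_support f (⋃ b, t b), Set.iUnion_inter,
    finsum_mem_iUnion (h.mono fun b b' hd => hd.mono inter_subset_left inter_subset_left) ht,
    ← finsum_eq_sum_of_fintype]
  exact finsum_congr fun b => finsum_mem_inter_support f (t b)

lemma finsum_mem_const_mul {α : Type*} (c : ℂ) (f : α → ℂ) (s : Set α)
    (hs : (s ∩ support f).Finite) :
    ∑ᶠ a ∈ s, c * f a = c * ∑ᶠ a ∈ s, f a := by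
  have hset : s ∩ support (fun a => c * f a) =
      ↑hs.toFinset ∩ support (fun a => c * f a) := by
    rw [Set.Finite.coe_toFinset]
    ext a
    simp only [Set.mem_inter_iff, mem_support]
    constructor
    · rintro ⟨ha, h0⟩
      exact ⟨⟨ha, fun hf => h0 (by simp [hf])⟩, h0⟩
    · rintro ⟨⟨ha, _⟩, h0⟩
      exact ⟨ha, h0⟩
  rw [finsum_mem_eq_sum_of_inter_support_eq _ hset, finsum_mem_eq_sum f hs, ← Finset.mul_sum]

end IGRAux

/-- For a `1`-structural set `S` with zero diagonal weights off `S`,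
the matrix `I - M_{S̄ S̄}` is invertible and
`R_S(G,1) = M_{SS} + M_{S S̄} (I - M_{S̄ S̄})⁻¹ M_{S̄ S}`. -/
theorem reduced_matrix_block_formula
    {V : Type*} [Fintype V] [DecidableEq V]
    (E : V → V → Prop) (ω : V → V → ℂ)
    (hω : ∀ i j, ¬ E i j → ω i j = 0)
    (S : Set V) [DecidablePred (· ∈ S)]
    (hstr : IsStructural E ω 1 S)
    (hdiag : ∀ ℓ, ℓ ∉ S → ω ℓ ℓ = 0) :
    IsUnit (1 - Matrix.of fun (a b : ↥(Sᶜ : Set V)) => ω a b) ∧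
      (Matrix.of fun (i j : ↥S) => Rentry E S ω 1 i j) =
        (Matrix.of fun (a b : ↥S) => ω a b) +
          (Matrix.of fun (a : ↥S) (b : ↥(Sᶜ : Set V)) => ω a b) *
            (1 - Matrix.of fun (a b : ↥(Sᶜ : Set V)) => ω a b)⁻¹ *
            (Matrix.of fun (a : ↥(Sᶜ : Set V)) (b : ↥S) => ω a b) := by
  classical
  set r : V → V → Prop := fun a b => a ∉ S ∧ b ∉ S ∧ ω a b ≠ 0 with hrdef
  have hrE : ∀ a b, r a b → E a b := fun a b h => by
    by_contra hE; exact h.2.2 (hω a b hE)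
  have hrS : ∀ a b, r a b → a ∉ S ∧ b ∉ S := fun a b h => ⟨h.1, h.2.1⟩
  have hloop : ∀ a, ¬ r a a := fun a h => h.2.2 (hdiag a h.1)
  have hnc := IGRAux.no_closed hrE hrS hloop hstr.2.1
  have hnd := IGRAux.chain'_nodup hnc
  set n := Fintype.card V with hn
  set N : Matrix ↥(Sᶜ : Set V) ↥(Sᶜ : Set V) ℂ :=
    Matrix.of fun a b => ω a b with hNdef
  have hpow : ∀ k (a b : ↥(Sᶜ : Set V)), (N ^ (k+1)) a b ≠ 0 →
      ∃ l : List V, l.Chain' r ∧ l.head? = some ↑a ∧ l.getLast? = some ↑b ∧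
        l.length = k + 2 := by
    intro k
    induction k with
    | zero =>
      intro a b h
      rw [pow_one] at h
      refine ⟨[↑a, ↑b], List.isChain_cons_cons.2 ⟨⟨a.2, b.2, h⟩, List.isChain_singleton _⟩,
        rfl, by simp, rfl⟩
    | succ k ih =>
      intro a b h
      rw [pow_succ, Matrix.mul_apply] at h
      obtain ⟨c, -, hc⟩ := Finset.exists_ne_zero_of_sum_ne_zero h
      have h1 : (N ^ (k+1)) a c ≠ 0 := fun h0 => hc (by rw [h0, zero_mul])
      have h2 : N c b ≠ 0 := fun h0 => hc (by rw [h0, mul_zero])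
      obtain ⟨l, hchain, hh, hl, hlen⟩ := ih a c h1
      have hlne : l ≠ [] := by intro h0; rw [h0] at hlen; simp at hlen
      refine ⟨l ++ [(b : V)], ?_, ?_, ?_, by simp [hlen]⟩
      · simp only [List.Chain']
        rw [List.isChain_append]
        refine ⟨hchain, List.isChain_singleton _, ?_⟩
        intro x hx y hy
        rw [hl, Option.mem_some_iff] at hx
        simp only [List.head?_cons, Option.mem_some_iff] at hy
        subst hx; subst hy
        exact ⟨c.2, b.2, h2⟩
      · cases l with
        | nil => exact absurd rfl hlne
        | cons x t => simpa using hh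
      · rw [List.getLast?_append_of_ne_nil _ (by simp)]; simp
  have hnil : N ^ (n + 1) = 0 := by
    ext a b
    rw [Matrix.zero_apply]
    by_contra h0
    obtain ⟨l, hchain, -, -, hlen⟩ := hpow n a b h0
    have hcard := (hnd l hchain).length_le_card
    rw [hlen] at hcard
    omega
  have hunit : IsUnit (1 - N) := IsNilpotent.isUnit_one_sub ⟨n + 1, hnil⟩
  refine ⟨hunit, ?_⟩
  ext i j
  simp only [Matrix.add_apply, Matrix.of_apply]
  set jv : V := (j : V) with hjv
  set w : List V → ℂ := branchWeight ω 1 with hwdef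
  set Wset : V → Set (List V) := fun a =>
    {l : List V | 2 ≤ l.length ∧ l.head? = some a ∧ l.getLast? = some jv ∧
      ∀ v ∈ l.tail.dropLast, v ∉ S} with hWdef
  have hkey : ∀ (a : V) (t : List V), (∀ v ∈ t, v ∉ S) → IGRAux.pw ω a jv t ≠ 0 → t.Nodup := by
    intro a t hm hne
    cases t with
    | nil => exact List.nodup_nil
    | cons b t' =>
      have hb : b ∉ S := hm b (by simp)
      have h2 : IGRAux.pw ω b jv t' ≠ 0 := fun h => hne (by simp [IGRAux.pw, h])
      exact hnd _ (IGRAux.pw_chain' t' b jv (fun v hv => hm v (by simp [hv])) hb h2)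
  have hsupp : ∀ a : V, (Wset a ∩ Function.support w).Finite := by
    intro a
    refine (List.finite_length_le V (n + 2)).subset ?_
    rintro l ⟨⟨h2, hh, hgl, hint⟩, hwne⟩
    have hrep := IGRAux.head?_getLast?_eq l a jv hh hgl h2
    rw [Function.mem_support, hwdef, hrep, IGRAux.bw_eq_pw hdiag _ a jv hint] at hwne
    have hndt := hkey a _ hint hwne
    have hlt := hndt.length_le_card
    have : l.length = l.tail.dropLast.length + 2 := by
      conv_lhs => rw [hrep]
      simp
    simp only [Set.mem_setOf_eq]
    omega
  set Φ : V → ℂ := fun a => ∑ᶠ l ∈ Wset a, w l with hΦdef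
  have hrec : ∀ a : V, Φ a = ω a jv + ∑ b : ↥(Sᶜ : Set V), ω a ↑b * Φ ↑b := by
    intro a
    have hdecomp : Wset a = {[a, jv]} ∪
        ⋃ b : ↥(Sᶜ : Set V), (fun l => a :: l) '' Wset ↑b := by
      ext l
      simp only [Set.mem_union, Set.mem_singleton_iff, Set.mem_iUnion, Set.mem_image,
        hWdef, Set.mem_setOf_eq]
      constructor
      · rintro ⟨h2, hh, hgl, hint⟩
        have hrep := IGRAux.head?_getLast?_eq l a jv hh hgl h2
        cases ht : l.tail.dropLast with
        | nil => left; rw [ht] at hrep; simpa using hrep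
        | cons b t' =>
          right
          rw [ht] at hrep hint
          have hb : b ∉ S := hint b (by simp)
          refine ⟨⟨b, hb⟩, b :: (t' ++ [jv]), ⟨by simp, rfl, ?_, ?_⟩, ?_⟩
          · show (b :: (t' ++ [jv])).getLast? = some jv
            rw [show b :: (t' ++ [jv]) = (b :: t') ++ [jv] by simp,
              List.getLast?_append_of_ne_nil _ (by simp)]
            simp
          · intro v hv
            simp only [List.tail_cons, List.dropLast_concat] at hv
            exact hint v (by simp [hv])
          · rw [hrep]; simp
      · rintro (rfl | ⟨b, l', ⟨h2, hh, hgl, hint⟩, rfl⟩)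
        · exact ⟨by simp, rfl, by simp, by simp⟩
        · have hlne : l' ≠ [] := by intro h0; rw [h0] at h2; simp at h2
          have hrep := IGRAux.head?_getLast?_eq l' (↑b) jv hh hgl h2
          refine ⟨by simp; omega, rfl, ?_, ?_⟩
          · rw [show a :: l' = [a] ++ l' by simp,
              List.getLast?_append_of_ne_nil _ hlne]
            exact hgl
          · intro v hv
            simp only [List.tail_cons] at hv
            rw [hrep] at hv
            simp only [List.dropLast_cons_of_ne_nil (by simp : l'.tail.dropLast ++ [jv] ≠ []),
              List.dropLast_concat, List.mem_cons] at hv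
            rcases hv with rfl | hv
            · exact b.2
            · exact hint v hv
    have hdisj : Disjoint ({[a, jv]} : Set (List V))
        (⋃ b : ↥(Sᶜ : Set V), (fun l => a :: l) '' Wset ↑b) := by
      rw [Set.disjoint_left]
      rintro l rfl hmem
      simp only [Set.mem_iUnion, Set.mem_image] at hmem
      obtain ⟨b, l', hl', heq⟩ := hmem
      have : l' = [jv] := by injection heq
      rw [this] at hl'
      have := hl'.1
      simp at this
    have hsub : ∀ b : ↥(Sᶜ : Set V), ((fun l => a :: l) '' Wset ↑b) ⊆ Wset a := by
      intro b l hl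
      have : l ∈ {[a, jv]} ∪ ⋃ b : ↥(Sᶜ : Set V), (fun l => a :: l) '' Wset ↑b :=
        Set.mem_union_right _ (Set.mem_iUnion.2 ⟨b, hl⟩)
      rwa [← hdecomp] at this
    have hpd : Pairwise (Disjoint on fun b : ↥(Sᶜ : Set V) =>
        (fun l => a :: l) '' Wset ↑b) := by
      intro b b' hbb'
      rw [Function.onFun, Set.disjoint_left]
      rintro l ⟨l₁, hl₁, rfl⟩ ⟨l₂, hl₂, heq⟩
      have : l₂ = l₁ := by injection heq
      rw [this] at hl₂
      have h1 := hl₁.2.1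
      have h2 := hl₂.2.1
      rw [h1] at h2
      exact hbb' (Subtype.ext (Option.some.inj h2))
    calc Φ a = ∑ᶠ l ∈ Wset a, w l := rfl
      _ = ∑ᶠ l ∈ ({[a, jv]} ∪ ⋃ b : ↥(Sᶜ : Set V), (fun l => a :: l) '' Wset ↑b), w l := by
          rw [← hdecomp]
      _ = (∑ᶠ l ∈ ({[a, jv]} : Set (List V)), w l) +
          ∑ᶠ l ∈ ⋃ b : ↥(Sᶜ : Set V), (fun l => a :: l) '' Wset ↑b, w l := by
          refine finsum_mem_union' hdisj ((Set.finite_singleton _).inter_of_left _) ?_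
          refine (hsupp a).subset ?_
          exact Set.inter_subset_inter_left _ (Set.iUnion_subset hsub)
      _ = w [a, jv] + ∑ b : ↥(Sᶜ : Set V), ∑ᶠ l ∈ (fun l => a :: l) '' Wset ↑b, w l := by
          rw [finsum_mem_singleton,
            IGRAux.finsum_mem_iUnion' w _ hpd
              (fun b => (hsupp a).subset (Set.inter_subset_inter_left _ (hsub b)))]
      _ = ω a jv + ∑ b : ↥(Sᶜ : Set V), ω a ↑b * Φ ↑b := by
          have h1 : w [a, jv] = ω a jv := by simp [hwdef, branchWeight]
          rw [h1]
          congr 1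
          refine Finset.sum_congr rfl fun b _ => ?_
          rw [finsum_mem_image (fun l₁ _ l₂ _ h => by injection h)]
          rw [finsum_mem_congr rfl
            (fun l' hl' => IGRAux.bw_cons hdiag l' a (↑b) hl'.2.1 hl'.1 b.2)]
          exact IGRAux.finsum_mem_const_mul _ _ _ (hsupp ↑b)
  -- linear algebra part
  set x : ↥(Sᶜ : Set V) → ℂ := fun b => Φ ↑b with hxdef
  set c0 : ↥(Sᶜ : Set V) → ℂ := fun b => ω ↑b jv with hc0def
  have hxc : (1 - N).mulVec x = c0 := by
    funext b
    have hb := hrec ↑b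
    have hmv : N.mulVec x b = ∑ b' : ↥(Sᶜ : Set V), ω ↑b ↑b' * Φ ↑b' := by
      simp [Matrix.mulVec, dotProduct, hNdef, hxdef]
    simp only [Matrix.sub_mulVec, Matrix.one_mulVec, Pi.sub_apply, hmv]
    have hxb : x b = Φ ↑b := rfl
    have hcb : c0 b = ω ↑b jv := rfl
    rw [hxb, hcb, hb]
    ring
  have hxval : x = (1 - N)⁻¹.mulVec c0 := by
    have hinv : (1 - N)⁻¹ * (1 - N) = 1 :=
      Matrix.nonsing_inv_mul _ ((Matrix.isUnit_iff_isUnit_det _).1 hunit)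
    calc x = ((1 - N)⁻¹ * (1 - N)).mulVec x := by rw [hinv, Matrix.one_mulVec]
      _ = (1 - N)⁻¹.mulVec ((1 - N).mulVec x) := by rw [← Matrix.mulVec_mulVec]
      _ = (1 - N)⁻¹.mulVec c0 := by rw [hxc]
  have hR : Rentry E S ω 1 ↑i ↑j = Φ ↑i := by
    refine finsum_mem_inter_support_eq _ _ _ ?_
    ext l
    simp only [Set.mem_inter_iff, Set.mem_setOf_eq, Function.mem_support, hWdef]
    constructor
    · rintro ⟨⟨h2, hcE, hh, hgl, htn, hdn, hint⟩, hwne⟩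
      exact ⟨⟨h2, hh, hgl, hint⟩, hwne⟩
    · rintro ⟨⟨h2, hh, hgl, hint⟩, hwne⟩
      have hrep := IGRAux.head?_getLast?_eq l (↑i) jv hh hgl h2
      set t := l.tail.dropLast with htdef
      have hpwne : IGRAux.pw ω (↑i) jv t ≠ 0 := by
        rwa [hrep, IGRAux.bw_eq_pw hdiag _ _ _ hint] at hwne
      have hndt : t.Nodup := hkey _ _ hint hpwne
      have hjnt : jv ∉ t := fun hmem => hint jv hmem j.2
      have hint' : (↑i : V) ∉ t := fun hmem => hint _ hmem i.2
      refine ⟨⟨h2, ?_, hh, hgl, ?_, ?_, hint⟩, hwne⟩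
      · rw [hrep]; exact IGRAux.pw_chain'E hω t (↑i) jv hpwne
      · rw [hrep]
        simp only [List.tail_cons]
        rw [List.nodup_append]
        exact ⟨hndt, by simp, by simp; exact fun a ha h => hjnt (h ▸ ha)⟩
      · rw [hrep]
        rw [List.dropLast_cons_of_ne_nil (by simp), List.dropLast_concat]
        exact List.nodup_cons.2 ⟨hint', hndt⟩
  have hRHS : ((Matrix.of fun (a : ↥S) (b : ↥(Sᶜ : Set V)) => ω a b) *
        (1 - N)⁻¹ * (Matrix.of fun (a : ↥(Sᶜ : Set V)) (b : ↥S) => ω a b)) i j =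
      ∑ b : ↥(Sᶜ : Set V), ω ↑i ↑b * ((1 - N)⁻¹.mulVec c0) b := by
    calc ((Matrix.of fun (a : ↥S) (b : ↥(Sᶜ : Set V)) => ω a b) *
        (1 - N)⁻¹ * (Matrix.of fun (a : ↥(Sᶜ : Set V)) (b : ↥S) => ω a b)) i j
        = ∑ b : ↥(Sᶜ : Set V), ∑ b' : ↥(Sᶜ : Set V),
            (ω ↑i ↑b' * (1 - N)⁻¹ b' b) * ω ↑b jv := by
          simp only [Matrix.mul_apply, Matrix.of_apply, Finset.sum_mul]
          rfl
      _ = ∑ b' : ↥(Sᶜ : Set V), ∑ b : ↥(Sᶜ : Set V),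
            (ω ↑i ↑b' * (1 - N)⁻¹ b' b) * ω ↑b jv := Finset.sum_comm
      _ = ∑ b : ↥(Sᶜ : Set V), ω ↑i ↑b * ((1 - N)⁻¹.mulVec c0) b := by
          refine Finset.sum_congr rfl fun b' _ => ?_
          simp only [Matrix.mulVec, dotProduct, hc0def, Finset.mul_sum]
          exact Finset.sum_congr rfl fun b _ => by ring
  rw [hR, hrec ↑i, hRHS]
  congr 1
  refine Finset.sum_congr rfl fun b _ => ?_
  rw [hxval] at hxdef
  rw [show Φ ↑b = x b from rfl, hxval]
end

section
/- Let m ∈ ℕ, m ≥ 1, and N ∈ ℝ, N ≥ 0. For all real numbers x₀, x₁, …, x_m with 0 ≤ x₀ ≤ x₁ ≤ … ≤ x_m = N, one has Σ_{i=1}^{m} x_{i−1}(x_i − x_{i−1}) ≤ m·N²/(2(m+1)) ≤ N²/2. -/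
lemma sum_ident (x : ℕ → ℝ) (m : ℕ) :
    (∑ i ∈ Finset.range m, x i * (x (i + 1) - x i)) =
      (x m ^ 2 - x 0 ^ 2 - ∑ i ∈ Finset.range m, (x (i + 1) - x i) ^ 2) / 2 := by
  induction m with
  | zero => simp
  | succ n ih => rw [Finset.sum_range_succ, Finset.sum_range_succ, ih]; ring

/-- Lemma 5 of the paper. For `m ≥ 1`, `N ≥ 0` and reals
`0 ≤ x₀ ≤ x₁ ≤ … ≤ x_m = N`, one has
`Σ_{i=1}^m x_{i-1}(x_i - x_{i-1}) ≤ m N² / (2(m+1)) ≤ N²/2`. -/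
theorem simplex_sum_bound
    (m : ℕ) (hm : 1 ≤ m) (N : ℝ) (hN : 0 ≤ N)
    (x : ℕ → ℝ) (hx0 : 0 ≤ x 0) (hmono : ∀ i < m, x i ≤ x (i + 1)) (hxm : x m = N) :
    (∑ i ∈ Finset.range m, x i * (x (i + 1) - x i)) ≤ m * N ^ 2 / (2 * (m + 1)) ∧
      (m : ℝ) * N ^ 2 / (2 * (m + 1)) ≤ N ^ 2 / 2 := by
  set d : ℕ → ℝ := fun i => if i = 0 then x 0 else x i - x (i - 1) with hd
  have hsum : ∑ i ∈ Finset.range (m + 1), d i = x m := by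
    rw [Finset.sum_range_succ']
    simp only [hd]
    have : ∀ i ∈ Finset.range m, (if i + 1 = 0 then x 0 else x (i + 1) - x (i + 1 - 1)) =
        x (i + 1) - x i := by intro i _; simp
    rw [Finset.sum_congr rfl this, Finset.sum_range_sub]
    simp
  have hsq : ∑ i ∈ Finset.range (m + 1), d i ^ 2 =
      x 0 ^ 2 + ∑ i ∈ Finset.range m, (x (i + 1) - x i) ^ 2 := by
    rw [Finset.sum_range_succ']
    simp only [hd]
    have : ∀ i ∈ Finset.range m, (if i + 1 = 0 then x 0 else x (i + 1) - x (i + 1 - 1)) ^ 2 =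
        (x (i + 1) - x i) ^ 2 := by intro i _; simp
    rw [Finset.sum_congr rfl this]
    simp [add_comm]
  have hCS := sq_sum_le_card_mul_sum_sq (s := Finset.range (m + 1)) (f := d)
  rw [hsum, hxm, Finset.card_range] at hCS
  rw [hsq] at hCS
  have hm1 : (0 : ℝ) < (m : ℝ) + 1 := by positivity
  constructor
  · rw [sum_ident, hxm]
    rw [div_le_div_iff₀ (by norm_num) (by positivity)]
    push_cast at hCS ⊢
    nlinarith [hCS]
  · rw [div_le_div_iff₀ (by positivity) (by norm_num)]
    nlinarith [sq_nonneg N, hm1]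
end

section
/- Let m ∈ ℕ, m ≥ 1, and N ∈ ℝ, N > 0. The maximum of the function F(x₀,…,x_m) = Σ_{i=1}^{m} x_{i−1}(x_i − x_{i−1}) over the simplex Δ^m_N = {0 ≤ x₀ ≤ x₁ ≤ … ≤ x_m = N} equals m·N²/(2(m+1)), and it is attained at the point with x_i = (i+1)N/(m+1) for i = 0,…,m, i.e. at the arithmetic progression (N/(m+1), 2N/(m+1), …, N). -/
private lemma gauss_aux (n : ℕ) : ∑ i ∈ Finset.range n, ((i:ℝ) + 1) = (n:ℝ) * ((n:ℝ) + 1) / 2 := by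
  induction n with
  | zero => simp
  | succ k ih => rw [Finset.sum_range_succ, ih]; push_cast; ring

private lemma ident_aux (x : ℕ → ℝ) (n : ℕ) :
    ∑ i ∈ Finset.range n, x i * (x (i + 1) - x i)
      = (x n ^ 2 - x 0 ^ 2) / 2 - (∑ i ∈ Finset.range n, (x (i+1) - x i)^2) / 2 := by
  induction n with
  | zero => simp
  | succ k ih => rw [Finset.sum_range_succ, Finset.sum_range_succ, ih]; ring

/-- For `m ≥ 1` and `N > 0`, the maximum of
`F(x₀,…,x_m) = Σ_{i=1}^m x_{i-1}(x_i - x_{i-1})` over the simplex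
`Δ^m_N = {0 ≤ x₀ ≤ … ≤ x_m = N}` equals `m N² / (2(m+1))`, attained at the arithmetic
progression `x_i = (i+1) N / (m+1)`. -/
theorem simplex_sum_max
    (m : ℕ) (hm : 1 ≤ m) (N : ℝ) (hN : 0 < N) :
    IsGreatest
      ((fun x : ℕ → ℝ => ∑ i ∈ Finset.range m, x i * (x (i + 1) - x i)) ''
        {x : ℕ → ℝ | 0 ≤ x 0 ∧ (∀ i < m, x i ≤ x (i + 1)) ∧ x m = N})
      ((m : ℝ) * N ^ 2 / (2 * (m + 1))) ∧
    (fun i : ℕ => ((i : ℝ) + 1) * N / ((m : ℝ) + 1)) ∈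
      {x : ℕ → ℝ | 0 ≤ x 0 ∧ (∀ i < m, x i ≤ x (i + 1)) ∧ x m = N} ∧
    (∑ i ∈ Finset.range m,
        (((i : ℝ) + 1) * N / ((m : ℝ) + 1)) *
          ((((i : ℝ) + 1 + 1) * N / ((m : ℝ) + 1)) - ((i : ℝ) + 1) * N / ((m : ℝ) + 1))) =
      (m : ℝ) * N ^ 2 / (2 * (m + 1)) := by
  have hm1 : (0:ℝ) < (m:ℝ) + 1 := by positivity
  -- membership of the arithmetic progression
  have hmem : (fun i : ℕ => ((i : ℝ) + 1) * N / ((m : ℝ) + 1)) ∈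
      {x : ℕ → ℝ | 0 ≤ x 0 ∧ (∀ i < m, x i ≤ x (i + 1)) ∧ x m = N} := by
    refine ⟨by positivity, fun i _ => ?_, ?_⟩
    · show ((i:ℝ) + 1) * N / ((m:ℝ)+1) ≤ (((i+1:ℕ):ℝ) + 1) * N / ((m:ℝ)+1)
      push_cast
      gcongr
      linarith
    · show ((m:ℝ) + 1) * N / ((m:ℝ) + 1) = N
      field_simp
  -- value at the arithmetic progression
  have hval : (∑ i ∈ Finset.range m,
        (((i : ℝ) + 1) * N / ((m : ℝ) + 1)) *
          ((((i : ℝ) + 1 + 1) * N / ((m : ℝ) + 1)) - ((i : ℝ) + 1) * N / ((m : ℝ) + 1))) =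
      (m : ℝ) * N ^ 2 / (2 * (m + 1)) := by
    have h2 : (∑ i ∈ Finset.range m,
        (((i : ℝ) + 1) * N / ((m : ℝ) + 1)) *
          ((((i : ℝ) + 1 + 1) * N / ((m : ℝ) + 1)) - ((i : ℝ) + 1) * N / ((m : ℝ) + 1)))
        = (∑ i ∈ Finset.range m, ((i:ℝ) + 1)) * (N^2 / ((m:ℝ)+1)^2) := by
      rw [Finset.sum_mul]
      refine Finset.sum_congr rfl fun i _ => ?_
      field_simp
      ring
    rw [h2, gauss_aux]
    field_simp
  have hval' : ((fun x : ℕ → ℝ => ∑ i ∈ Finset.range m, x i * (x (i + 1) - x i))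
      (fun i : ℕ => ((i : ℝ) + 1) * N / ((m : ℝ) + 1))) = (m : ℝ) * N ^ 2 / (2 * (m + 1)) := by
    simpa [mul_comm] using hval
  refine ⟨⟨⟨_, hmem, hval'⟩, ?_⟩, hmem, hval⟩
  -- upper bound
  rintro v ⟨x, ⟨hx0, hxmono, hxm⟩, rfl⟩
  set d : ℕ → ℝ := fun i => if i = 0 then x 0 else x i - x (i-1) with hd
  have hsumd : ∑ i ∈ Finset.range (m+1), d i = N := by
    rw [Finset.sum_range_succ']
    simp only [hd, if_neg (Nat.succ_ne_zero _), if_pos rfl, Nat.add_sub_cancel]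
    rw [Finset.sum_range_sub (fun i => x i)]
    simp [hxm]
  have hsq : (N:ℝ)^2 ≤ ((m:ℝ)+1) * ∑ i ∈ Finset.range (m+1), d i ^ 2 := by
    have := sq_sum_le_card_mul_sum_sq (s := Finset.range (m+1)) (f := d)
    rw [hsumd] at this
    simpa using this
  have hdsum : ∑ i ∈ Finset.range (m+1), d i ^ 2
      = x 0 ^ 2 + ∑ i ∈ Finset.range m, (x (i+1) - x i)^2 := by
    rw [Finset.sum_range_succ']
    simp only [hd, if_neg (Nat.succ_ne_zero _), if_pos rfl, Nat.add_sub_cancel]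
    ring
  show ∑ i ∈ Finset.range m, x i * (x (i + 1) - x i) ≤ (m : ℝ) * N ^ 2 / (2 * (m + 1))
  rw [ident_aux, hxm]
  have h1 : N^2 / ((m:ℝ)+1) ≤ ∑ i ∈ Finset.range (m+1), d i ^ 2 :=
    (div_le_iff₀ hm1).mpr (by linarith)
  rw [hdsum] at h1
  have hx02 : 0 ≤ x 0 ^ 2 := sq_nonneg _
  have h1' : N ^ 2 ≤ ((m:ℝ)+1) * (x 0 ^ 2 + ∑ i ∈ Finset.range m, (x (i+1) - x i)^2) := by
    rw [← hdsum]; exact hsq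
  rw [le_div_iff₀ (by positivity)]
  nlinarith [h1']
end
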